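/- arXiv:1209.2522 — 4 statements merged into one kernel-verified Lean document; each statement's English description precedes it below -/
import Mathlib

section
/- Let Ω ⊆ ℝᴺ have finite Lebesgue measure and let p = N/(N-2) with N ≥ 5. Suppose uₙ, vₙ, u, v : Ω → ℝ are measurable, uₙ → u and vₙ → v almost everywhere in Ω, and sup_n ∫_Ω |uₙ|^{2p} dx < ∞, sup_n ∫_Ω |vₙ|^{2p} dx < ∞. Then ∫_Ω (|uₙ|^p |vₙ|^p − |uₙ − u|^p |vₙ − v|^p) dx → ∫_Ω |u|^p |v|^p dx as n → ∞. -/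
open Real Filter MeasureTheory
open scoped ENNReal Topology

lemma two_rpow {x y q : ℝ} (hx : 0 ≤ x) (hy : 0 ≤ y) (hq : 0 ≤ q) :
    (x + y) ^ q ≤ 2 ^ q * (x ^ q + y ^ q) := by
  have h1 : (x + y) ^ q ≤ (2 * max x y) ^ q := by
    apply Real.rpow_le_rpow (by linarith) ?_ hq
    rcases le_total x y with h | h
    · simp [max_eq_right h]; linarith
    · simp [max_eq_left h]; linarith
  have h2 : (2 * max x y) ^ q = 2 ^ q * (max x y) ^ q :=
    Real.mul_rpow (by norm_num) (le_max_of_le_left hx)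
  have h3 : (max x y) ^ q ≤ x ^ q + y ^ q := by
    rcases le_total x y with h | h
    · rw [max_eq_right h]; exact le_add_of_nonneg_left (Real.rpow_nonneg hx q)
    · rw [max_eq_left h]; exact le_add_of_nonneg_right (Real.rpow_nonneg hy q)
  calc (x + y) ^ q ≤ 2 ^ q * (max x y) ^ q := by rw [← h2]; exact h1
    _ ≤ 2 ^ q * (x ^ q + y ^ q) := by
        exact mul_le_mul_of_nonneg_left h3 (Real.rpow_nonneg (by norm_num) q)

lemma sq_abs_rpow (p x : ℝ) : (|x| ^ p) ^ 2 = |x| ^ (2 * p) := by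
  rw [← Real.rpow_natCast (|x| ^ p) 2, ← Real.rpow_mul (abs_nonneg x)]
  norm_num [mul_comm]

lemma good_sub {ε α β x z s t : ℝ} (hε : 0 < ε)
    (hx : 0 ≤ x) (hz : 0 ≤ z) (hβ : 0 ≤ β) (hβ1 : β ≤ 1) (h1α : 1 ≤ α)
    (hαβ : α ^ 2 - β ^ 2 ≤ ε)
    (hs1 : s ≤ α * x) (hs2 : β * x ≤ s) (ht1 : t ≤ α * z) (ht2 : β * z ≤ t) :
    |s * t - x * z| ≤ ε * (x ^ 2 + z ^ 2) := by
  have hxz : 0 ≤ x * z := mul_nonneg hx hz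
  have hα0 : (0:ℝ) ≤ α := by linarith
  have hst1 : s * t ≤ (α * x) * (α * z) :=
    mul_le_mul hs1 ht1 (le_trans (mul_nonneg hβ hz) ht2) (mul_nonneg hα0 hx)
  have hst2 : (β * x) * (β * z) ≤ s * t :=
    mul_le_mul hs2 ht2 (mul_nonneg hβ hz) (le_trans (mul_nonneg hβ hx) hs2)
  have key1 : (α ^ 2 - β ^ 2) * (x * z) ≤ ε * (x * z) :=
    mul_le_mul_of_nonneg_right hαβ hxz
  have hle : x * z ≤ x ^ 2 + z ^ 2 := by nlinarith [sq_nonneg (x - z)]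
  have key2 : ε * (x * z) ≤ ε * (x ^ 2 + z ^ 2) := mul_le_mul_of_nonneg_left hle hε.le
  rw [abs_le]
  constructor
  · nlinarith [mul_nonneg (sub_nonneg.2 h1α) hxz]
  · nlinarith [mul_nonneg (mul_nonneg (sub_nonneg.2 hβ1) hβ) hxz,
      mul_nonneg (sub_nonneg.2 hβ1) hxz]

lemma eYoung' {ε : ℝ} (hε : 0 < ε) (y z : ℝ) : y * z ≤ ε * z ^ 2 + 1 / (4 * ε) * y ^ 2 := by
  rw [show ε * z ^ 2 + 1 / (4 * ε) * y ^ 2 = (4 * ε * ε * z ^ 2 + y ^ 2) / (4 * ε) by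
    field_simp, le_div_iff₀ (by positivity)]
  nlinarith [sq_nonneg (2 * ε * z - y)]

lemma bad_sub {ε M Q K x y z w s t : ℝ} (hε : 0 < ε) (hQ : 0 ≤ Q) (hK : 0 ≤ K)
    (hx : 0 ≤ x) (hy : 0 ≤ y) (hz : 0 ≤ z) (hw : 0 ≤ w) (hs : 0 ≤ s) (ht : 0 ≤ t)
    (hst : s * t ≤ Q * (x + y) * (z + w)) (hxK : x ≤ K * y)
    (hM : Q * (K + 1) + K ≤ M) :
    |s * t - x * z| ≤ ε * (x ^ 2 + z ^ 2) + (1 / (4 * ε) * M ^ 2 + M) * (y ^ 2 + w ^ 2) := by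
  have hM0 : 0 ≤ M := le_trans (by positivity) hM
  have e1 : x + y ≤ (K + 1) * y := by linarith
  have e2 : Q * (x + y) * (z + w) ≤ Q * ((K + 1) * y) * (z + w) :=
    mul_le_mul_of_nonneg_right (mul_le_mul_of_nonneg_left e1 hQ) (by linarith)
  have e3 : x * z ≤ (K * y) * z := mul_le_mul_of_nonneg_right hxK hz
  have h1 : s * t + x * z ≤ M * (y * z) + M * (y * w) := by
    nlinarith [mul_nonneg hy hz, mul_nonneg hy hw]
  have h2 : (M * y) * z ≤ ε * z ^ 2 + 1 / (4 * ε) * (M * y) ^ 2 := eYoung' hε (M * y) z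
  have h3 : M * (y * w) ≤ M * (y ^ 2 + w ^ 2) / 2 := by nlinarith [sq_nonneg (y - w)]
  have habs : |s * t - x * z| ≤ s * t + x * z := by
    rw [abs_le]
    constructor <;> nlinarith [mul_nonneg hs ht, mul_nonneg hx hz]
  have h4 : 0 ≤ 1 / (4 * ε) * M ^ 2 := by positivity
  nlinarith [mul_nonneg hε.le (sq_nonneg x), mul_nonneg h4 (sq_nonneg w),
    mul_nonneg hM0 (sq_nonneg y), mul_nonneg hM0 (sq_nonneg w)]

set_option maxHeartbeats 1000000 in
lemma key_ineq (p : ℝ) (hp : 1 ≤ p) (ε : ℝ) (hε : 0 < ε) :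
    ∃ C : ℝ, 0 < C ∧ ∀ a b c d : ℝ,
      abs (|a + b| ^ p * |c + d| ^ p - |a| ^ p * |c| ^ p) ≤
        ε * ((|a| ^ p) ^ 2 + (|c| ^ p) ^ 2) + C * ((|b| ^ p) ^ 2 + (|d| ^ p) ^ 2) := by
  have hp0 : (0:ℝ) < p := lt_of_lt_of_le one_pos hp
  -- choose δ by continuity
  have hF : Tendsto (fun t : ℝ => ((1 + t) ^ p) ^ 2 - ((1 - t) ^ p) ^ 2) (𝓝 0) (𝓝 0) := by
    have h1 : Tendsto (fun t : ℝ => 1 + t) (𝓝 0) (𝓝 1) := by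
      exact (continuous_const.add continuous_id').tendsto' 0 1 (by simp)
    have h2 : Tendsto (fun t : ℝ => 1 - t) (𝓝 0) (𝓝 1) := by
      exact (continuous_const.sub continuous_id').tendsto' 0 1 (by simp)
    have h1' := (h1.rpow_const (p := p) (Or.inl one_ne_zero)).pow 2
    have h2' := (h2.rpow_const (p := p) (Or.inl one_ne_zero)).pow 2
    have := h1'.sub h2'
    simpa using this
  have hev : ∀ᶠ t in 𝓝 (0:ℝ), ((1 + t) ^ p) ^ 2 - ((1 - t) ^ p) ^ 2 < ε ∧ t < 1 :=
    (hF.eventually_lt_const hε).and (eventually_lt_nhds one_pos)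
  obtain ⟨δ, ⟨hFδ, hδ1⟩, hδ0⟩ :=
    ((eventually_nhdsWithin_of_eventually_nhds hev).and
      (self_mem_nhdsWithin (s := Set.Ioi (0:ℝ)))).exists
  set α := (1 + δ) ^ p with hα
  set β := (1 - δ) ^ p with hβ
  have hβ0 : 0 ≤ β := Real.rpow_nonneg (by linarith) p
  have hβ1 : β ≤ 1 := by
    calc β ≤ 1 ^ p := Real.rpow_le_rpow (by linarith) (by linarith) hp0.le
      _ = 1 := Real.one_rpow p
  have h1α : 1 ≤ α := by
    calc (1:ℝ) = 1 ^ p := (Real.one_rpow p).symm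
      _ ≤ α := Real.rpow_le_rpow zero_le_one (by linarith) hp0.le
  set K := (1 / δ) ^ p with hK
  have hK0 : 0 < K := Real.rpow_pos_of_pos (by positivity) p
  set Q := (4:ℝ) ^ p with hQ
  have hQ0 : 0 < Q := Real.rpow_pos_of_pos (by norm_num) p
  set M := Q * (K + 1) + K with hM
  have hM0 : 0 < M := by positivity
  refine ⟨1 / (4 * ε) * M ^ 2 + M, by positivity, ?_⟩
  intro a b c d
  set A := |a| with hA
  set B := |b| with hB
  set Cc := |c| with hCc
  set D := |d| with hD
  have hA0 : 0 ≤ A := abs_nonneg a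
  have hB0 : 0 ≤ B := abs_nonneg b
  have hC0 : 0 ≤ Cc := abs_nonneg c
  have hD0 : 0 ≤ D := abs_nonneg d
  have ha'0 : 0 ≤ A ^ p := Real.rpow_nonneg hA0 p
  have hb'0 : 0 ≤ B ^ p := Real.rpow_nonneg hB0 p
  have hc'0 : 0 ≤ Cc ^ p := Real.rpow_nonneg hC0 p
  have hd'0 : 0 ≤ D ^ p := Real.rpow_nonneg hD0 p
  have hs0 : 0 ≤ |a + b| ^ p := Real.rpow_nonneg (abs_nonneg _) p
  have ht0 : 0 ≤ |c + d| ^ p := Real.rpow_nonneg (abs_nonneg _) p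
  by_cases hgood : B ≤ δ * A ∧ D ≤ δ * Cc
  · obtain ⟨hgB, hgD⟩ := hgood
    have hsα : |a + b| ^ p ≤ α * A ^ p := by
      calc |a + b| ^ p ≤ ((1 + δ) * A) ^ p := by
            apply Real.rpow_le_rpow (abs_nonneg _) ?_ hp0.le
            calc |a + b| ≤ A + B := abs_add_le a b
              _ ≤ (1 + δ) * A := by linarith
        _ = α * A ^ p := Real.mul_rpow (by linarith) hA0
    have hsβ : β * A ^ p ≤ |a + b| ^ p := by
      calc β * A ^ p = ((1 - δ) * A) ^ p := (Real.mul_rpow (by linarith) hA0).symm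
        _ ≤ |a + b| ^ p := by
            apply Real.rpow_le_rpow (by nlinarith) ?_ hp0.le
            have : A - B ≤ |a + b| := by
              have := abs_add_le (a + b) (-b)
              simp only [add_neg_cancel_right, abs_neg] at this
              linarith
            nlinarith
    have htα : |c + d| ^ p ≤ α * Cc ^ p := by
      calc |c + d| ^ p ≤ ((1 + δ) * Cc) ^ p := by
            apply Real.rpow_le_rpow (abs_nonneg _) ?_ hp0.le
            calc |c + d| ≤ Cc + D := abs_add_le c d
              _ ≤ (1 + δ) * Cc := by linarith
        _ = α * Cc ^ p := Real.mul_rpow (by linarith) hC0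
    have htβ : β * Cc ^ p ≤ |c + d| ^ p := by
      calc β * Cc ^ p = ((1 - δ) * Cc) ^ p := (Real.mul_rpow (by linarith) hC0).symm
        _ ≤ |c + d| ^ p := by
            apply Real.rpow_le_rpow (by nlinarith) ?_ hp0.le
            have : Cc - D ≤ |c + d| := by
              have := abs_add_le (c + d) (-d)
              simp only [add_neg_cancel_right, abs_neg] at this
              linarith
            nlinarith
    have := good_sub hε ha'0 hc'0 hβ0 hβ1 h1α hFδ.le hsα hsβ htα htβ
    have hCnn : 0 ≤ (1 / (4 * ε) * M ^ 2 + M) * ((B ^ p) ^ 2 + (D ^ p) ^ 2) := by positivity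
    linarith
  · -- bad case
    have hsub : |a + b| ^ p * |c + d| ^ p ≤ Q * (A ^ p + B ^ p) * (Cc ^ p + D ^ p) := by
      have hs : |a + b| ^ p ≤ 2 ^ p * (A ^ p + B ^ p) := by
        calc |a + b| ^ p ≤ (A + B) ^ p :=
              Real.rpow_le_rpow (abs_nonneg _) (abs_add_le a b) hp0.le
          _ ≤ 2 ^ p * (A ^ p + B ^ p) := two_rpow hA0 hB0 hp0.le
      have ht : |c + d| ^ p ≤ 2 ^ p * (Cc ^ p + D ^ p) := by
        calc |c + d| ^ p ≤ (Cc + D) ^ p :=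
              Real.rpow_le_rpow (abs_nonneg _) (abs_add_le c d) hp0.le
          _ ≤ 2 ^ p * (Cc ^ p + D ^ p) := two_rpow hC0 hD0 hp0.le
      have h4 : (2:ℝ) ^ p * 2 ^ p = Q := by
        rw [hQ, ← Real.mul_rpow (by norm_num) (by norm_num)]; norm_num
      calc |a + b| ^ p * |c + d| ^ p
          ≤ (2 ^ p * (A ^ p + B ^ p)) * (2 ^ p * (Cc ^ p + D ^ p)) :=
            mul_le_mul hs ht ht0 (by positivity)
        _ = Q * (A ^ p + B ^ p) * (Cc ^ p + D ^ p) := by rw [← h4]; ring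
    rw [not_and_or] at hgood
    push_neg at hgood
    rcases hgood with hbad | hbad
    · -- δ * A < B
      have hxK : A ^ p ≤ K * B ^ p := by
        calc A ^ p ≤ (B * (1 / δ)) ^ p := by
              apply Real.rpow_le_rpow hA0 ?_ hp0.le
              rw [mul_one_div, le_div_iff₀ hδ0]
              nlinarith
          _ = K * B ^ p := by
              rw [Real.mul_rpow hB0 (by positivity)]; ring
      exact bad_sub hε hQ0.le hK0.le ha'0 hb'0 hc'0 hd'0 hs0 ht0 hsub hxK le_rfl
    · -- δ * Cc < D : symmetric, swap roles
      have hxK : Cc ^ p ≤ K * D ^ p := by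
        calc Cc ^ p ≤ (D * (1 / δ)) ^ p := by
              apply Real.rpow_le_rpow hC0 ?_ hp0.le
              rw [mul_one_div, le_div_iff₀ hδ0]
              nlinarith
          _ = K * D ^ p := by
              rw [Real.mul_rpow hD0 (by positivity)]; ring
      have hsub' : |c + d| ^ p * |a + b| ^ p ≤ Q * (Cc ^ p + D ^ p) * (A ^ p + B ^ p) := by
        calc |c + d| ^ p * |a + b| ^ p = |a + b| ^ p * |c + d| ^ p := by ring
          _ ≤ Q * (A ^ p + B ^ p) * (Cc ^ p + D ^ p) := hsub
          _ = Q * (Cc ^ p + D ^ p) * (A ^ p + B ^ p) := by ring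
      have := bad_sub hε hQ0.le hK0.le hc'0 hd'0 ha'0 hb'0 ht0 hs0 hsub' hxK le_rfl
      calc abs (|a + b| ^ p * |c + d| ^ p - A ^ p * Cc ^ p)
          = abs (|c + d| ^ p * |a + b| ^ p - Cc ^ p * A ^ p) := by ring_nf
        _ ≤ ε * ((Cc ^ p) ^ 2 + (A ^ p) ^ 2) +
            (1 / (4 * ε) * M ^ 2 + M) * ((D ^ p) ^ 2 + (B ^ p) ^ 2) := this
        _ = ε * ((A ^ p) ^ 2 + (Cc ^ p) ^ 2) +
            (1 / (4 * ε) * M ^ 2 + M) * ((B ^ p) ^ 2 + (D ^ p) ^ 2) := by ring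

set_option maxHeartbeats 1000000 in
theorem stmt_13 (N : ℕ) (hN : 5 ≤ N) (p : ℝ) (hp : p = (N : ℝ) / ((N : ℝ) - 2))
    (Ω : Set (EuclideanSpace ℝ (Fin N))) (hΩ : MeasurableSet Ω) (hΩfin : volume Ω < ⊤)
    (u v : EuclideanSpace ℝ (Fin N) → ℝ)
    (un vn : ℕ → EuclideanSpace ℝ (Fin N) → ℝ)
    (hu : Measurable u) (hv : Measurable v)
    (hun : ∀ n, Measurable (un n)) (hvn : ∀ n, Measurable (vn n))
    (huae : ∀ᵐ x ∂(volume.restrict Ω), Tendsto (fun n => un n x) atTop (nhds (u x)))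
    (hvae : ∀ᵐ x ∂(volume.restrict Ω), Tendsto (fun n => vn n x) atTop (nhds (v x)))
    (Cu Cv : ℝ≥0∞) (hCu : Cu ≠ ⊤) (hCv : Cv ≠ ⊤)
    (hubd : ∀ n, (∫⁻ x in Ω, ENNReal.ofReal (|un n x| ^ (2 * p))) ≤ Cu)
    (hvbd : ∀ n, (∫⁻ x in Ω, ENNReal.ofReal (|vn n x| ^ (2 * p))) ≤ Cv) :
    Tendsto
      (fun n => ∫ x in Ω,
        (|un n x| ^ p * |vn n x| ^ p - |un n x - u x| ^ p * |vn n x - v x| ^ p))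
      atTop (nhds (∫ x in Ω, |u x| ^ p * |v x| ^ p)) := by
  have hN5 : (5:ℝ) ≤ (N:ℝ) := by exact_mod_cast hN
  have hp1 : 1 ≤ p := by rw [hp, le_div_iff₀ (by linarith)]; linarith
  have hp0 : 0 < p := lt_of_lt_of_le one_pos hp1
  have h2p0 : (0:ℝ) ≤ 2 * p := by linarith
  set μ := volume.restrict Ω with hμ
  set g := fun (n : ℕ) (x : EuclideanSpace ℝ (Fin N)) =>
    |un n x| ^ p * |vn n x| ^ p - |un n x - u x| ^ p * |vn n x - v x| ^ p with hg
  set f := fun (x : EuclideanSpace ℝ (Fin N)) => |u x| ^ p * |v x| ^ p with hf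
  set hh := fun (n : ℕ) (x : EuclideanSpace ℝ (Fin N)) =>
    |un n x - u x| ^ (2 * p) + |vn n x - v x| ^ (2 * p) with hhh
  set φ := fun (x : EuclideanSpace ℝ (Fin N)) => |u x| ^ (2 * p) + |v x| ^ (2 * p) with hφ
  have nn : ∀ (y q : ℝ), 0 ≤ |y| ^ q := fun y q => Real.rpow_nonneg (abs_nonneg y) q
  have mRp : ∀ (w : EuclideanSpace ℝ (Fin N) → ℝ), Measurable w → ∀ q : ℝ, 0 ≤ q →
      Measurable fun x => |w x| ^ q := fun w hw q hq =>
    (Real.continuous_rpow_const hq).measurable.comp hw.abs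
  -- integrability of the 2p-powers
  have hIun : ∀ n, Integrable (fun x => |un n x| ^ (2 * p)) μ := by
    intro n
    refine ⟨(mRp _ (hun n) _ h2p0).aestronglyMeasurable, ?_⟩
    rw [hasFiniteIntegral_iff_ofReal (Eventually.of_forall fun x => nn _ _)]
    exact lt_of_le_of_lt (hubd n) hCu.lt_top
  have hIvn : ∀ n, Integrable (fun x => |vn n x| ^ (2 * p)) μ := by
    intro n
    refine ⟨(mRp _ (hvn n) _ h2p0).aestronglyMeasurable, ?_⟩
    rw [hasFiniteIntegral_iff_ofReal (Eventually.of_forall fun x => nn _ _)]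
    exact lt_of_le_of_lt (hvbd n) hCv.lt_top
  -- Fatou
  have hFatou : ∀ (w : EuclideanSpace ℝ (Fin N) → ℝ) (wn : ℕ → EuclideanSpace ℝ (Fin N) → ℝ)
      (hw : Measurable w) (hwn : ∀ n, Measurable (wn n))
      (hae : ∀ᵐ x ∂μ, Tendsto (fun n => wn n x) atTop (𝓝 (w x)))
      (Cw : ℝ≥0∞) (hbd : ∀ n, (∫⁻ x, ENNReal.ofReal (|wn n x| ^ (2 * p)) ∂μ) ≤ Cw),
      (∫⁻ x, ENNReal.ofReal (|w x| ^ (2 * p)) ∂μ) ≤ Cw := by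
    intro w wn hw hwn hae Cw hbd
    have hcongr : (∫⁻ x, ENNReal.ofReal (|w x| ^ (2 * p)) ∂μ) =
        ∫⁻ x, liminf (fun n => ENNReal.ofReal (|wn n x| ^ (2 * p))) atTop ∂μ := by
      refine lintegral_congr_ae (hae.mono fun x hx => ?_)
      exact (ENNReal.tendsto_ofReal (hx.abs.rpow_const (Or.inr h2p0))).liminf_eq.symm
    rw [hcongr]
    refine le_trans (lintegral_liminf_le fun n =>
      ENNReal.measurable_ofReal.comp (mRp _ (hwn n) _ h2p0)) ?_
    have hll := Filter.liminf_le_liminf (Eventually.of_forall hbd) (f := atTop)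
    simpa [Filter.liminf_const] using hll
  have hFu : (∫⁻ x, ENNReal.ofReal (|u x| ^ (2 * p)) ∂μ) ≤ Cu := hFatou u un hu hun huae Cu hubd
  have hFv : (∫⁻ x, ENNReal.ofReal (|v x| ^ (2 * p)) ∂μ) ≤ Cv := hFatou v vn hv hvn hvae Cv hvbd
  have hIu : Integrable (fun x => |u x| ^ (2 * p)) μ := by
    refine ⟨(mRp _ hu _ h2p0).aestronglyMeasurable, ?_⟩
    rw [hasFiniteIntegral_iff_ofReal (Eventually.of_forall fun x => nn _ _)]
    exact lt_of_le_of_lt hFu hCu.lt_top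
  have hIv : Integrable (fun x => |v x| ^ (2 * p)) μ := by
    refine ⟨(mRp _ hv _ h2p0).aestronglyMeasurable, ?_⟩
    rw [hasFiniteIntegral_iff_ofReal (Eventually.of_forall fun x => nn _ _)]
    exact lt_of_le_of_lt hFv hCv.lt_top
  -- real integral bounds
  have hreal : ∀ (w : EuclideanSpace ℝ (Fin N) → ℝ), Measurable w → ∀ (Cw : ℝ≥0∞), Cw ≠ ⊤ →
      (∫⁻ x, ENNReal.ofReal (|w x| ^ (2 * p)) ∂μ) ≤ Cw →
      (∫ x, |w x| ^ (2 * p) ∂μ) ≤ Cw.toReal := by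
    intro w hw Cw hCw hbd
    rw [integral_eq_lintegral_of_nonneg_ae (Eventually.of_forall fun x => nn _ _)
      (mRp _ hw _ h2p0).aestronglyMeasurable]
    exact ENNReal.toReal_mono hCw hbd
  -- pointwise bound on differences
  have hdiffpt : ∀ (w z : EuclideanSpace ℝ (Fin N) → ℝ) (x : EuclideanSpace ℝ (Fin N)),
      |w x - z x| ^ (2 * p) ≤ 2 ^ (2 * p) * (|w x| ^ (2 * p) + |z x| ^ (2 * p)) := by
    intro w z x
    calc |w x - z x| ^ (2 * p) ≤ (|w x| + |z x|) ^ (2 * p) :=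
          Real.rpow_le_rpow (abs_nonneg _) (abs_sub _ _) h2p0
      _ ≤ 2 ^ (2 * p) * (|w x| ^ (2 * p) + |z x| ^ (2 * p)) :=
          two_rpow (abs_nonneg _) (abs_nonneg _) h2p0
  have hIdun : ∀ n, Integrable (fun x => |un n x - u x| ^ (2 * p)) μ := by
    intro n
    refine Integrable.mono' (((hIun n).add hIu).const_mul (2 ^ (2 * p)))
      (mRp _ ((hun n).sub hu) _ h2p0).aestronglyMeasurable
      (Eventually.of_forall fun x => ?_)
    rw [Real.norm_eq_abs, abs_of_nonneg (nn _ _)]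
    exact hdiffpt _ _ x
  have hIdvn : ∀ n, Integrable (fun x => |vn n x - v x| ^ (2 * p)) μ := by
    intro n
    refine Integrable.mono' (((hIvn n).add hIv).const_mul (2 ^ (2 * p)))
      (mRp _ ((hvn n).sub hv) _ h2p0).aestronglyMeasurable
      (Eventually.of_forall fun x => ?_)
    rw [Real.norm_eq_abs, abs_of_nonneg (nn _ _)]
    exact hdiffpt _ _ x
  have hIh : ∀ n, Integrable (hh n) μ := fun n => (hIdun n).add (hIdvn n)
  have hIφ : Integrable φ μ := hIu.add hIv
  -- uniform bound on ∫ hh n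
  set K := 2 ^ (2 * p) * (2 * Cu.toReal) + 2 ^ (2 * p) * (2 * Cv.toReal) with hKdef
  have hK0 : 0 ≤ K := by positivity
  have hInth : ∀ n, (∫ x, hh n x ∂μ) ≤ K := by
    intro n
    rw [hhh]
    rw [integral_add (hIdun n) (hIdvn n)]
    have h1 : (∫ x, |un n x - u x| ^ (2 * p) ∂μ) ≤ 2 ^ (2 * p) * (2 * Cu.toReal) := by
      have hmono : (∫ x, |un n x - u x| ^ (2 * p) ∂μ) ≤
          ∫ x, 2 ^ (2 * p) * (|un n x| ^ (2 * p) + |u x| ^ (2 * p)) ∂μ :=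
        integral_mono (hIdun n) (((hIun n).add hIu).const_mul _) (fun x => hdiffpt _ _ x)
      rw [integral_const_mul, integral_add (hIun n) hIu] at hmono
      have h2 := hreal _ (hun n) Cu hCu (hubd n)
      have h3 := hreal _ hu Cu hCu hFu
      have hpow : (0:ℝ) ≤ 2 ^ (2 * p) := by positivity
      nlinarith
    have h1' : (∫ x, |vn n x - v x| ^ (2 * p) ∂μ) ≤ 2 ^ (2 * p) * (2 * Cv.toReal) := by
      have hmono : (∫ x, |vn n x - v x| ^ (2 * p) ∂μ) ≤
          ∫ x, 2 ^ (2 * p) * (|vn n x| ^ (2 * p) + |v x| ^ (2 * p)) ∂μ :=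
        integral_mono (hIdvn n) (((hIvn n).add hIv).const_mul _) (fun x => hdiffpt _ _ x)
      rw [integral_const_mul, integral_add (hIvn n) hIv] at hmono
      have h2 := hreal _ (hvn n) Cv hCv (hvbd n)
      have h3 := hreal _ hv Cv hCv hFv
      have hpow : (0:ℝ) ≤ 2 ^ (2 * p) := by positivity
      nlinarith
    linarith
  -- integrability of products
  have hprod : ∀ (w z : EuclideanSpace ℝ (Fin N) → ℝ), Measurable w → Measurable z →
      Integrable (fun x => |w x| ^ (2 * p)) μ → Integrable (fun x => |z x| ^ (2 * p)) μ →
      Integrable (fun x => |w x| ^ p * |z x| ^ p) μ := by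
    intro w z hw hz hiw hiz
    refine Integrable.mono' (hiw.add hiz)
      ((mRp w hw p hp0.le).mul (mRp z hz p hp0.le)).aestronglyMeasurable
      (Eventually.of_forall fun x => ?_)
    rw [Real.norm_eq_abs, abs_of_nonneg (mul_nonneg (nn _ _) (nn _ _))]
    simp only [Pi.add_apply]
    have e1 := sq_abs_rpow p (w x)
    have e2 := sq_abs_rpow p (z x)
    nlinarith [sq_nonneg (|w x| ^ p - |z x| ^ p), nn (w x) p, nn (z x) p]
  have hIg : ∀ n, Integrable (g n) μ := fun n =>
    (hprod _ _ (hun n) (hvn n) (hIun n) (hIvn n)).sub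
      (hprod _ _ ((hun n).sub hu) ((hvn n).sub hv) (hIdun n) (hIdvn n))
  have hIf : Integrable f μ := hprod _ _ hu hv hIu hIv
  -- reduce to L¹ convergence
  suffices htend : Tendsto (fun n => ∫ x, |g n x - f x| ∂μ) atTop (𝓝 0) by
    have hdiff : ∀ n, ‖(∫ x, g n x ∂μ) - ∫ x, f x ∂μ‖ ≤ ∫ x, |g n x - f x| ∂μ := by
      intro n
      rw [← integral_sub (hIg n) hIf]
      calc ‖∫ x, (g n x - f x) ∂μ‖ ≤ ∫ x, ‖g n x - f x‖ ∂μ := norm_integral_le_integral_norm _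
        _ = ∫ x, |g n x - f x| ∂μ := by simp [Real.norm_eq_abs]
    rw [tendsto_iff_norm_sub_tendsto_zero]
    exact squeeze_zero (fun n => norm_nonneg _) hdiff htend
  rw [Metric.tendsto_atTop]
  intro ε hε
  set ε' := ε / (2 * (K + 1)) with hε'def
  have hε'0 : 0 < ε' := by rw [hε'def]; positivity
  obtain ⟨C, hC0, hkey⟩ := key_ineq p hp1 ε' hε'0
  -- pointwise bound
  have hpt : ∀ n x, |g n x - f x| ≤ ε' * hh n x + (C + 1) * φ x := by
    intro n x
    have hab : un n x - u x + u x = un n x := by ring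
    have hcd : vn n x - v x + v x = vn n x := by ring
    have hk := hkey (un n x - u x) (u x) (vn n x - v x) (v x)
    rw [hab, hcd, sq_abs_rpow, sq_abs_rpow, sq_abs_rpow, sq_abs_rpow] at hk
    have h1 : |u x| ^ p * |v x| ^ p ≤ φ x := by
      have e1 := sq_abs_rpow p (u x)
      have e2 := sq_abs_rpow p (v x)
      simp only [hφ]
      nlinarith [sq_nonneg (|u x| ^ p - |v x| ^ p), nn (u x) p, nn (v x) p]
    have h3 : 0 ≤ φ x := add_nonneg (nn _ _) (nn _ _)
    have h4 : |g n x - f x| ≤ |g n x| + |u x| ^ p * |v x| ^ p := by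
      calc |g n x - f x| ≤ |g n x| + |f x| := abs_sub _ _
        _ = |g n x| + |u x| ^ p * |v x| ^ p := by
            rw [hf, abs_of_nonneg (mul_nonneg (nn _ _) (nn _ _))]
    have h5 : |g n x| ≤ ε' * hh n x + C * φ x := hk
    linarith
  -- dominated convergence for W
  set W := fun (n : ℕ) (x : EuclideanSpace ℝ (Fin N)) =>
    max (|g n x - f x| - ε' * hh n x) 0 with hW
  have hgmeas : ∀ n, Measurable (g n) := fun n =>
    ((mRp _ (hun n) p hp0.le).mul (mRp _ (hvn n) p hp0.le)).sub
      ((mRp _ ((hun n).sub hu) p hp0.le).mul (mRp _ ((hvn n).sub hv) p hp0.le))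
  have hfmeas : Measurable f := (mRp _ hu p hp0.le).mul (mRp _ hv p hp0.le)
  have hhmeas : ∀ n, Measurable (hh n) := fun n =>
    (mRp _ ((hun n).sub hu) _ h2p0).add (mRp _ ((hvn n).sub hv) _ h2p0)
  have hWmeas : ∀ n, Measurable (W n) := fun n =>
    (((hgmeas n).sub hfmeas).abs.sub ((hhmeas n).const_mul ε')).max measurable_const
  have hWle : ∀ n x, ‖W n x‖ ≤ (C + 1) * φ x := by
    intro n x
    rw [Real.norm_eq_abs, abs_of_nonneg (le_max_right _ _)]
    have h3 : 0 ≤ φ x := add_nonneg (nn _ _) (nn _ _)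
    apply max_le ?_ (by positivity)
    have := hpt n x
    have hh0 : 0 ≤ hh n x := add_nonneg (nn _ _) (nn _ _)
    nlinarith [mul_nonneg hε'0.le hh0]
  have hWtend : ∀ᵐ x ∂μ, Tendsto (fun n => W n x) atTop (𝓝 0) := by
    filter_upwards [huae, hvae] with x hux hvx
    have t1 : Tendsto (fun n => |un n x| ^ p) atTop (𝓝 (|u x| ^ p)) :=
      hux.abs.rpow_const (Or.inr hp0.le)
    have t2 : Tendsto (fun n => |vn n x| ^ p) atTop (𝓝 (|v x| ^ p)) :=
      hvx.abs.rpow_const (Or.inr hp0.le)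
    have t3 : Tendsto (fun n => un n x - u x) atTop (𝓝 0) := by
      simpa using hux.sub (tendsto_const_nhds (x := u x))
    have t4 : Tendsto (fun n => vn n x - v x) atTop (𝓝 0) := by
      simpa using hvx.sub (tendsto_const_nhds (x := v x))
    have t3p : Tendsto (fun n => |un n x - u x| ^ p) atTop (𝓝 0) := by
      have := t3.abs.rpow_const (p := p) (Or.inr hp0.le)
      simpa [Real.zero_rpow hp0.ne'] using this
    have t4p : Tendsto (fun n => |vn n x - v x| ^ p) atTop (𝓝 0) := by
      have := t4.abs.rpow_const (p := p) (Or.inr hp0.le)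
      simpa [Real.zero_rpow hp0.ne'] using this
    have t32p : Tendsto (fun n => |un n x - u x| ^ (2 * p)) atTop (𝓝 0) := by
      have := t3.abs.rpow_const (p := 2 * p) (Or.inr h2p0)
      simpa [Real.zero_rpow (by positivity : 2 * p ≠ 0)] using this
    have t42p : Tendsto (fun n => |vn n x - v x| ^ (2 * p)) atTop (𝓝 0) := by
      have := t4.abs.rpow_const (p := 2 * p) (Or.inr h2p0)
      simpa [Real.zero_rpow (by positivity : 2 * p ≠ 0)] using this
    have hgx : Tendsto (fun n => g n x) atTop (𝓝 (f x)) := by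
      have := (t1.mul t2).sub (t3p.mul t4p)
      simpa [hg, hf] using this
    have hhx : Tendsto (fun n => hh n x) atTop (𝓝 0) := by
      have := t32p.add t42p
      simpa [hhh] using this
    have hcomb : Tendsto (fun n => |g n x - f x| - ε' * hh n x) atTop (𝓝 0) := by
      have := ((hgx.sub (tendsto_const_nhds (x := f x))).abs).sub (hhx.const_mul ε')
      simpa using this
    have := hcomb.max (tendsto_const_nhds (x := (0:ℝ)) (f := atTop))
    simpa using this
  have hDCT := tendsto_integral_of_dominated_convergence (μ := μ) (F := W)
    (f := fun _ => (0:ℝ)) (bound := fun x => (C + 1) * φ x)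
    (fun n => (hWmeas n).aestronglyMeasurable) (hIφ.const_mul _)
    (fun n => Eventually.of_forall (hWle n)) hWtend
  rw [integral_zero] at hDCT
  have hev2 : ∀ᶠ n in atTop, (∫ x, W n x ∂μ) < ε / 2 := by
    refine hDCT.eventually_lt_const ?_
    positivity
  obtain ⟨Nn, hNn⟩ := eventually_atTop.mp hev2
  refine ⟨Nn, fun n hn => ?_⟩
  have hIW : ∀ m, Integrable (W m) μ := fun m =>
    Integrable.mono' (hIφ.const_mul _) (hWmeas m).aestronglyMeasurable
      (Eventually.of_forall (hWle m))
  have hptW : ∀ x, |g n x - f x| ≤ W n x + ε' * hh n x := by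
    intro x
    have h1 : |g n x - f x| - ε' * hh n x ≤ W n x := le_max_left _ _
    linarith
  have hle : (∫ x, |g n x - f x| ∂μ) ≤ (∫ x, W n x ∂μ) + ε' * ∫ x, hh n x ∂μ := by
    calc (∫ x, |g n x - f x| ∂μ) ≤ ∫ x, (W n x + ε' * hh n x) ∂μ :=
          integral_mono ((hIg n).sub hIf).abs ((hIW n).add ((hIh n).const_mul ε')) hptW
      _ = (∫ x, W n x ∂μ) + ε' * ∫ x, hh n x ∂μ := by
          rw [integral_add (hIW n) ((hIh n).const_mul ε'), integral_const_mul]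
  have hKbd : ε' * (∫ x, hh n x ∂μ) ≤ ε / 2 := by
    have h1 : ε' * (∫ x, hh n x ∂μ) ≤ ε' * K :=
      mul_le_mul_of_nonneg_left (hInth n) hε'0.le
    have h2 : ε' * K ≤ ε / 2 := by
      rw [hε'def, div_mul_eq_mul_div, div_le_div_iff₀ (by positivity) (by norm_num)]
      nlinarith
    exact le_trans h1 h2
  have hfin : (∫ x, |g n x - f x| ∂μ) < ε := by
    have := hNn n hn
    linarith
  rw [Real.dist_eq, sub_zero, abs_of_nonneg (integral_nonneg fun x => abs_nonneg _)]
  exact hfin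
end

section
/- Let N ≥ 5, μ₁, μ₂, β > 0 and 2* = 2N/(N-2). Suppose U, V : ℝᴺ → ℝ are twice continuously differentiable, positive, radially symmetric with radially non-increasing profiles, satisfy ∫_{ℝᴺ} |∇U|² dx < ∞, ∫_{ℝᴺ} |∇V|² dx < ∞, ∫_{ℝᴺ} U^{2*} dx < ∞, ∫_{ℝᴺ} V^{2*} dx < ∞, and solve pointwise on ℝᴺ the system −ΔU = μ₁ U^{2*-1} + β U^{2*/2-1} V^{2*/2}, −ΔV = μ₂ V^{2*-1} + β V^{2*/2-1} U^{2*/2}. Then there exists C > 0 such that U(x) + V(x) ≤ C(1 + |x|)^{2-N} and |∇U(x)| + |∇V(x)| ≤ C(1 + |x|)^{1-N} for all x ∈ ℝᴺ. -/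
set_option maxHeartbeats 2000000
open Real MeasureTheory


variable {E : Type*} [NormedAddCommGroup E] [InnerProductSpace ℝ E]

lemma hasFDerivAt_norm'' (x : E) (hx : x ≠ 0) :
    HasFDerivAt (fun y : E => ‖y‖) (‖x‖⁻¹ • innerSL ℝ x) x := by
  have h1 := (hasFDerivAt_id x).inner ℝ (hasFDerivAt_id x)
  have h2 := h1.sqrt (by
    simpa [real_inner_self_eq_norm_sq] using pow_ne_zero 2 (norm_ne_zero_iff.mpr hx))
  have h3 : (fun y : E => Real.sqrt (inner ℝ (id y) (id y))) = fun y : E => ‖y‖ := by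
    funext y
    simp only [id]
    rw [real_inner_self_eq_norm_sq, Real.sqrt_sq (norm_nonneg y)]
  rw [h3] at h2
  convert h2 using 1
  ext v
  simp only [ContinuousLinearMap.coe_smul', Pi.smul_apply, innerSL_apply_apply, smul_eq_mul,
    ContinuousLinearMap.coe_comp', Function.comp_apply, ContinuousLinearMap.prod_apply,
    ContinuousLinearMap.coe_id', id, fderivInnerCLM_apply]
  rw [real_inner_self_eq_norm_sq, Real.sqrt_sq (norm_nonneg x), real_inner_comm v x]
  have : ‖x‖ ≠ 0 := norm_ne_zero_iff.mpr hx
  field_simp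
  ring

/-- The `i`-th pure second partial derivative of `f` at `x`. -/
noncomputable def secondPartial {N : ℕ} (f : EuclideanSpace ℝ (Fin N) → ℝ)
    (x : EuclideanSpace ℝ (Fin N)) (i : Fin N) : ℝ :=
  fderiv ℝ (fun y => fderiv ℝ f y (EuclideanSpace.single i 1)) x (EuclideanSpace.single i 1)

/-- The Euclidean Laplacian: the sum of the pure second partial derivatives
(equivalently, the trace of the second derivative). -/
noncomputable def lap {N : ℕ} (f : EuclideanSpace ℝ (Fin N) → ℝ)
    (x : EuclideanSpace ℝ (Fin N)) : ℝ :=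
  ∑ i : Fin N, secondPartial f x i

variable {N : ℕ} {f : EuclideanSpace ℝ (Fin N) → ℝ} {φ : ℝ → ℝ}

lemma radial_hasFDerivAt (hφ : Differentiable ℝ φ) (hrad : ∀ y, f y = φ ‖y‖)
    {x : EuclideanSpace ℝ (Fin N)} (hx : x ≠ 0) :
    HasFDerivAt f ((deriv φ ‖x‖ * ‖x‖⁻¹) • innerSL ℝ x) x := by
  have h1 : HasDerivAt φ (deriv φ ‖x‖) ‖x‖ := (hφ ‖x‖).hasDerivAt
  have h2 := h1.comp_hasFDerivAt x (hasFDerivAt_norm'' x hx)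
  have h3 : f = fun y => φ ‖y‖ := funext hrad
  rw [h3]
  rw [smul_smul] at h2
  exact h2

lemma radial_fderiv (hφ : Differentiable ℝ φ) (hrad : ∀ y, f y = φ ‖y‖)
    {x : EuclideanSpace ℝ (Fin N)} (hx : x ≠ 0) :
    fderiv ℝ f x = (deriv φ ‖x‖ * ‖x‖⁻¹) • innerSL ℝ x :=
  (radial_hasFDerivAt hφ hrad hx).fderiv

lemma radial_norm_fderiv (hφ : Differentiable ℝ φ) (hrad : ∀ y, f y = φ ‖y‖)
    {x : EuclideanSpace ℝ (Fin N)} (hx : x ≠ 0) :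
    ‖fderiv ℝ f x‖ = |deriv φ ‖x‖| := by
  rw [radial_fderiv hφ hrad hx, norm_smul, innerSL_apply_norm]
  have h0 : (0:ℝ) < ‖x‖ := norm_pos_iff.mpr hx
  rw [Real.norm_eq_abs, abs_mul, abs_inv, abs_norm]
  field_simp

lemma radial_lap (hφ : ContDiff ℝ 2 φ) (hrad : ∀ y, f y = φ ‖y‖)
    {x : EuclideanSpace ℝ (Fin N)} (hx : x ≠ 0) :
    lap f x = deriv (deriv φ) ‖x‖ + ((N : ℝ) - 1) / ‖x‖ * deriv φ ‖x‖ := by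
  have h0 : (0:ℝ) < ‖x‖ := norm_pos_iff.mpr hx
  have hφ1 : Differentiable ℝ φ := hφ.differentiable (by norm_num)
  have hφ2 : Differentiable ℝ (deriv φ) := by
    have := (contDiff_succ_iff_deriv (n := 1)).mp (by exact_mod_cast hφ)
    exact this.2.2.differentiable one_ne_zero
  set r := ‖x‖ with hr
  set ψ : ℝ → ℝ := fun t => deriv φ t * t⁻¹ with hψ
  set ψ' : ℝ := deriv (deriv φ) r * r⁻¹ + deriv φ r * (-(r^2)⁻¹) with hψ'
  have hψd : HasDerivAt ψ ψ' r := ((hφ2 r).hasDerivAt).mul (hasDerivAt_inv h0.ne')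
  have hBn : HasFDerivAt (fun y : EuclideanSpace ℝ (Fin N) => ψ ‖y‖)
      (ψ' • (r⁻¹ • innerSL ℝ x)) x := by exact hψd.comp_hasFDerivAt x (hasFDerivAt_norm'' x hx)
  -- for each coordinate, identify secondPartial
  have key : ∀ i : Fin N, secondPartial f x i
      = ψ r + (x i) * (ψ' * (r⁻¹ * (x i))) := by
    intro i
    have hev : (fun y => fderiv ℝ f y (EuclideanSpace.single i 1))
        =ᶠ[nhds x] (fun y => ψ ‖y‖ * y i) := by
      filter_upwards [IsOpen.mem_nhds isOpen_compl_singleton hx] with y hy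
      have : fderiv ℝ f y = (deriv φ ‖y‖ * ‖y‖⁻¹) • innerSL ℝ y := radial_fderiv hφ1 hrad hy
      rw [this]
      simp [ψ, EuclideanSpace.inner_single_right, mul_comm, mul_assoc, mul_left_comm]
    have hgi : HasFDerivAt (fun y : EuclideanSpace ℝ (Fin N) => ψ ‖y‖ * y i)
        ((ψ r) • (EuclideanSpace.proj i : EuclideanSpace ℝ (Fin N) →L[ℝ] ℝ)
          + (x i) • (ψ' • (r⁻¹ • innerSL ℝ x))) x := by
      have hC : HasFDerivAt (fun y : EuclideanSpace ℝ (Fin N) => y i)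
          (EuclideanSpace.proj i : EuclideanSpace ℝ (Fin N) →L[ℝ] ℝ) x :=
        by simpa [PiLp.proj_apply] using
          (ContinuousLinearMap.hasFDerivAt (x := x) (EuclideanSpace.proj (𝕜 := ℝ) i))
      exact hBn.mul hC
    rw [secondPartial, hev.fderiv_eq, hgi.fderiv]
    simp [EuclideanSpace.inner_single_right]
  have hsum0 : ∑ i, x i * x i = r ^ 2 := by
    have := real_inner_self_eq_norm_sq x
    rw [← this]
    simp [PiLp.inner_apply, RCLike.inner_apply]
    rw [EuclideanSpace.norm_eq, Real.sq_sqrt (by positivity)]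
    simp [sq]
  have hsum : ∑ i, (ψ r + x i * (ψ' * (r⁻¹ * x i)))
      = (N : ℝ) * ψ r + ψ' * r⁻¹ * r ^ 2 := by
    rw [Finset.sum_add_distrib, Finset.sum_const, Finset.card_univ, Fintype.card_fin]
    have : ∑ i, x i * (ψ' * (r⁻¹ * x i)) = (ψ' * r⁻¹) * ∑ i, x i * x i := by
      rw [Finset.mul_sum]
      exact Finset.sum_congr rfl (fun i _ => by ring)
    rw [this, hsum0, nsmul_eq_mul]
  rw [lap, Finset.sum_congr rfl (fun i _ => key i), hsum]
  rw [hψ, hψ']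
  field_simp
  ring

section OneD
open Set Filter

section helpers
variable {r : ℝ}

lemma rpow_sub_one'' (hr : 0 < r) (a : ℝ) : r ^ (a - 1) = r ^ a * r⁻¹ := by
  rw [Real.rpow_sub hr, Real.rpow_one, div_eq_mul_inv]

end helpers

lemma endpoint_max {g P ρ : ℝ → ℝ} {a b : ℝ}
    (hgc : ContinuousOn g (Icc a b))
    (hgd : DifferentiableOn ℝ g (Ioo a b))
    (hd : ∀ x ∈ Ioo a b, deriv g x = ρ x * P x)
    (hρ : ∀ x ∈ Ioo a b, 0 < ρ x)
    (hP : MonotoneOn P (Ioo a b)) :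
    ∀ x ∈ Icc a b, g x ≤ max (g a) (g b) := by
  intro x hx
  rcases eq_or_lt_of_le hx.1 with h1 | h1
  · exact h1 ▸ le_max_left _ _
  rcases eq_or_lt_of_le hx.2 with h2 | h2
  · exact h2 ▸ le_max_right _ _
  have hxm : x ∈ Ioo a b := ⟨h1, h2⟩
  by_cases hPx : P x ≤ 0
  · have hanti : AntitoneOn g (Icc a x) := by
      apply antitoneOn_of_deriv_nonpos (convex_Icc a x)
        (hgc.mono (Icc_subset_Icc le_rfl hx.2))
      · rw [interior_Icc]
        exact hgd.mono (fun s hs => ⟨hs.1, hs.2.trans h2⟩)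
      · intro s hs
        rw [interior_Icc] at hs
        have hsm : s ∈ Ioo a b := ⟨hs.1, hs.2.trans h2⟩
        rw [hd s hsm]
        exact mul_nonpos_of_nonneg_of_nonpos (hρ s hsm).le
          ((hP hsm hxm hs.2.le).trans hPx)
    exact le_trans (hanti (left_mem_Icc.mpr hx.1) (right_mem_Icc.mpr hx.1) hx.1)
      (le_max_left _ _)
  · push_neg at hPx
    have hmono : MonotoneOn g (Icc x b) := by
      apply monotoneOn_of_deriv_nonneg (convex_Icc x b)
        (hgc.mono (Icc_subset_Icc hx.1 le_rfl))
      · rw [interior_Icc]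
        exact hgd.mono (fun s hs => ⟨h1.trans hs.1, hs.2⟩)
      · intro s hs
        rw [interior_Icc] at hs
        have hsm : s ∈ Ioo a b := ⟨h1.trans hs.1, hs.2⟩
        rw [hd s hsm]
        exact mul_nonneg (hρ s hsm).le (hPx.le.trans (hP hxm hsm hs.1.le))
    exact le_trans (hmono (left_mem_Icc.mpr hx.2) (right_mem_Icc.mpr hx.2) hx.2)
      (le_max_right _ _)

lemma nonpos_of_monotoneOn_tendsto {S : ℝ → ℝ} {R : ℝ}
    (hmono : MonotoneOn S (Ici R)) (hlim : Tendsto S atTop (nhds 0)) :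
    ∀ r, R ≤ r → S r ≤ 0 := by
  intro r hr
  refine ge_of_tendsto hlim ?_
  filter_upwards [eventually_ge_atTop r] with t ht
  exact hmono hr (hr.trans ht) ht

theorem ode_comp (n p K M R₁ : ℝ) (w w' w'' f : ℝ → ℝ)
    (hn : 5 ≤ n) (hp : p = 2*n/(n-2)) (hK : 0 < K) (hM : 0 < M) (hR₁ : 1 ≤ R₁)
    (hwd : ∀ r, HasDerivAt w (w' r) r)
    (hwd2 : ∀ r, HasDerivAt w' (w'' r) r)
    (hwpos : ∀ r, 0 < r → 0 < w r)
    (hode : ∀ r, 0 < r → w'' r + (n-1)/r * w' r = - f r)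
    (hfK : ∀ r, 0 < r → f r ≤ K * w r ^ (p-1))
    (hf0 : ∀ r, 0 < r → 0 ≤ f r)
    (hwM : ∀ r, R₁ ≤ r → w r ≤ M * r ^ (-(n-2)/2))
    (hsmall : K * M ^ (4/(n-2)) ≤ 1/2) :
    ∀ r, R₁ ≤ r → w r ≤ (w R₁ * R₁ ^ (n - 5/2)) * r ^ (-(n - 5/2)) := by
  have hn2 : (0:ℝ) < n - 2 := by linarith
  have hR₁0 : (0:ℝ) < R₁ := by linarith
  set γ : ℝ := n - 5/2 with hγ
  set δ : ℝ := 1/2 with hδ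
  set A : ℝ := w R₁ * R₁ ^ γ with hA
  have hApos : 0 < A := mul_pos (hwpos R₁ hR₁0) (Real.rpow_pos_of_pos hR₁0 γ)
  -- smallness of f
  have step1 : ∀ r, R₁ ≤ r → f r ≤ 1/2 * (r⁻¹ * r⁻¹) * w r := by
    intro r hr
    have h0 : 0 < r := lt_of_lt_of_le hR₁0 hr
    have hwr : 0 < w r := hwpos r h0
    have hp2 : p - 2 = 4/(n-2) := by rw [hp]; field_simp; ring
    have e1 : w r ^ (p-1) = w r ^ (p-2) * w r := by
      rw [show p - 1 = (p-2) + 1 by ring, Real.rpow_add hwr, Real.rpow_one]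
    have hp2pos : 0 < p - 2 := by rw [hp2]; positivity
    have e2 : w r ^ (p-2) ≤ (M * r ^ (-(n-2)/2)) ^ (p-2) :=
      Real.rpow_le_rpow hwr.le (hwM r hr) hp2pos.le
    have e3 : (M * r ^ (-(n-2)/2)) ^ (p-2) = M ^ (4/(n-2)) * (r⁻¹ * r⁻¹) := by
      rw [Real.mul_rpow hM.le (Real.rpow_pos_of_pos h0 _).le, ← Real.rpow_mul h0.le, hp2]
      congr 1
      rw [show -(n - 2) / 2 * (4 / (n - 2)) = (-1) + (-1) by field_simp; ring,
        Real.rpow_add h0, Real.rpow_neg_one]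
    have := hfK r h0
    calc f r ≤ K * w r ^ (p-1) := hfK r h0
      _ = K * (w r ^ (p-2) * w r) := by rw [e1]
      _ ≤ K * ((M ^ (4/(n-2)) * (r⁻¹ * r⁻¹)) * w r) := by
          apply mul_le_mul_of_nonneg_left _ hK.le
          apply mul_le_mul_of_nonneg_right _ hwr.le
          rw [← e3]; exact e2
      _ = (K * M ^ (4/(n-2))) * (r⁻¹ * r⁻¹) * w r := by ring
      _ ≤ 1/2 * (r⁻¹ * r⁻¹) * w r := by
          apply mul_le_mul_of_nonneg_right _ hwr.le
          apply mul_le_mul_of_nonneg_right hsmall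
          positivity
  -- main comparison, for each ε > 0
  have main : ∀ ε : ℝ, 0 < ε → ∀ r, R₁ ≤ r → w r ≤ A * r ^ (-γ) + ε * r ^ (-δ) := by
    intro ε hε
    set Y : ℝ → ℝ := fun r => A * r ^ (-γ) + ε * r ^ (-δ) with hY
    set Y' : ℝ → ℝ := fun r => A * (-γ * r ^ (-γ - 1)) + ε * (-δ * r ^ (-δ - 1)) with hY'
    set Y'' : ℝ → ℝ := fun r =>
      A * (-γ * ((-γ - 1) * r ^ (-γ - 1 - 1))) + ε * (-δ * ((-δ - 1) * r ^ (-δ - 1 - 1))) with hY''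
    have hYpos : ∀ r, 0 < r → 0 < Y r := fun r h0 => by
      have := Real.rpow_pos_of_pos h0 (-γ); have := Real.rpow_pos_of_pos h0 (-δ); positivity
    have hYd : ∀ r, 0 < r → HasDerivAt Y (Y' r) r := fun r h0 =>
      (((Real.hasDerivAt_rpow_const (p := -γ) (Or.inl h0.ne')).const_mul A).add
        ((Real.hasDerivAt_rpow_const (p := -δ) (Or.inl h0.ne')).const_mul ε))
    have hY'd : ∀ r, 0 < r → HasDerivAt Y' (Y'' r) r := fun r h0 =>
      ((((Real.hasDerivAt_rpow_const (p := -γ - 1) (Or.inl h0.ne')).const_mul (-γ)).const_mul A).add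
        (((Real.hasDerivAt_rpow_const (p := -δ - 1) (Or.inl h0.ne')).const_mul (-δ)).const_mul ε))
    -- supersolution inequality
    have hsup : ∀ r, 0 < r → Y'' r + (n-1)/r * Y' r ≤ -(1/2 * (r⁻¹ * r⁻¹) * Y r) := by
      intro r h0
      have hu : 0 < r ^ (-γ) := Real.rpow_pos_of_pos h0 _
      have hv : 0 < r ^ (-δ) := Real.rpow_pos_of_pos h0 _
      have hi : 0 < r⁻¹ := inv_pos.mpr h0
      have e1 : r ^ (-γ - 1) = r ^ (-γ) * r⁻¹ := rpow_sub_one'' h0 _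
      have e2 : r ^ (-γ - 1 - 1) = r ^ (-γ) * r⁻¹ * r⁻¹ := by
        rw [rpow_sub_one'' h0, e1]
      have e3 : r ^ (-δ - 1) = r ^ (-δ) * r⁻¹ := rpow_sub_one'' h0 _
      have e4 : r ^ (-δ - 1 - 1) = r ^ (-δ) * r⁻¹ * r⁻¹ := by
        rw [rpow_sub_one'' h0, e3]
      simp only [hY, hY', hY'', e1, e2, e3, e4]
      rw [div_eq_mul_inv]
      set u := r ^ (-γ); set v := r ^ (-δ); set i := r⁻¹
      have key : A * u * (i * i) * (γ * (γ + 1) - (n-1) * γ + 1/2)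
          + ε * v * (i * i) * (δ * (δ + 1) - (n-1) * δ + 1/2) ≤ 0 := by
        have hc : γ * (γ + 1) - (n-1) * γ + 1/2 = 7/4 - n/2 := by rw [hγ]; ring
        have hc' : δ * (δ + 1) - (n-1) * δ + 1/2 = 7/4 - n/2 := by rw [hδ]; ring
        rw [hc, hc']
        have h1 : 0 ≤ A * u * (i * i) := by positivity
        have h2 : 0 ≤ ε * v * (i * i) := by positivity
        nlinarith
      nlinarith [key]
-- monotone Wronskian
    set P : ℝ → ℝ := fun s => s^(n-1) * (w' s * Y s - w s * Y' s) with hPdef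
    have hPd : ∀ s, 0 < s → HasDerivAt P
        ((n-1) * s^(n-1-1) * (w' s * Y s - w s * Y' s)
          + s^(n-1) * ((w'' s * Y s + w' s * Y' s) - (w' s * Y' s + w s * Y'' s))) s :=
      fun s h0 =>
        (Real.hasDerivAt_rpow_const (p := n-1) (Or.inl h0.ne')).mul
          (((hwd2 s).mul (hYd s h0)).sub ((hwd s).mul (hY'd s h0)))
    have hP'0 : ∀ s, R₁ ≤ s →
        0 ≤ (n-1) * s^(n-1-1) * (w' s * Y s - w s * Y' s)
          + s^(n-1) * ((w'' s * Y s + w' s * Y' s) - (w' s * Y' s + w s * Y'' s)) := by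
      intro s hs
      have h0 : 0 < s := lt_of_lt_of_le hR₁0 hs
      have heq : (n-1) * s^(n-1-1) * (w' s * Y s - w s * Y' s)
          + s^(n-1) * ((w'' s * Y s + w' s * Y' s) - (w' s * Y' s + w s * Y'' s))
          = s^(n-1) * ((w'' s + (n-1)/s * w' s) * Y s - w s * (Y'' s + (n-1)/s * Y' s)) := by
        rw [rpow_sub_one'' h0, div_eq_mul_inv]; ring
      rw [heq, hode s h0]
      apply mul_nonneg (Real.rpow_pos_of_pos h0 _).le
      have h1 := hsup s h0
      have h2 := step1 s hs
      have hY0 := hYpos s h0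
      have hw0 := hwpos s h0
      nlinarith [mul_le_mul_of_nonneg_left h1 hw0.le, mul_le_mul_of_nonneg_right h2 hY0.le]
    have hPmono : MonotoneOn P (Ici R₁) := by
      apply monotoneOn_of_deriv_nonneg (convex_Ici R₁)
      · exact fun s hs => (hPd s (lt_of_lt_of_le hR₁0 hs)).continuousAt.continuousWithinAt
      · intro s hs
        rw [interior_Ici] at hs
        exact (hPd s (lt_trans hR₁0 hs)).differentiableAt.differentiableWithinAt
      · intro s hs
        rw [interior_Ici] at hs
        rw [(hPd s (lt_trans hR₁0 hs)).deriv]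
        exact hP'0 s hs.le
    intro r hr
    have h0r : 0 < r := lt_of_lt_of_le hR₁0 hr
    -- choose a large endpoint T
    have hten : Tendsto (fun T : ℝ => M * T ^ (-((n-3)/2))) atTop (nhds 0) := by
      have := (tendsto_rpow_neg_atTop (by linarith : (0:ℝ) < (n-3)/2)).const_mul M
      simpa using this
    obtain ⟨T, hT1, hT2⟩ := ((hten.eventually_lt_const hε).and
      (eventually_ge_atTop (max r R₁))).exists
    have hrT : r ≤ T := le_trans (le_max_left _ _) hT2
    have hR₁T : R₁ ≤ T := le_trans (le_max_right _ _) hT2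
    have hT0 : 0 < T := lt_of_lt_of_le hR₁0 hR₁T
    have hgR₁ : w R₁ / Y R₁ ≤ 1 := by
      rw [div_le_one (hYpos R₁ hR₁0)]
      have e : A * R₁ ^ (-γ) = w R₁ := by
        rw [hA, mul_assoc, ← Real.rpow_add hR₁0]; simp
      have : 0 < ε * R₁ ^ (-δ) := mul_pos hε (Real.rpow_pos_of_pos hR₁0 _)
      simp only [hY]; linarith [e]
    have hgT : w T / Y T ≤ 1 := by
      rw [div_le_one (hYpos T hT0)]
      have h1 : w T ≤ M * T ^ (-(n-2)/2) := hwM T hR₁T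
      have h2 : M * T ^ (-(n-2)/2) = (M * T ^ (-((n-3)/2))) * T ^ (-δ) := by
        rw [mul_assoc, ← Real.rpow_add hT0]
        congr 1
        rw [hδ]; ring_nf
      have h3 : (M * T ^ (-((n-3)/2))) * T ^ (-δ) ≤ ε * T ^ (-δ) :=
        mul_le_mul_of_nonneg_right hT1.le (Real.rpow_pos_of_pos hT0 _).le
      have h4 : 0 < A * T ^ (-γ) := mul_pos hApos (Real.rpow_pos_of_pos hT0 _)
      simp only [hY]; linarith
    have hgc : ContinuousOn (fun s => w s / Y s) (Icc R₁ T) := by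
      intro s hs
      have h0 : 0 < s := lt_of_lt_of_le hR₁0 hs.1
      exact ((hwd s).continuousAt.continuousWithinAt).div
        ((hYd s h0).continuousAt.continuousWithinAt) (hYpos s h0).ne'
    have hgd : DifferentiableOn ℝ (fun s => w s / Y s) (Ioo R₁ T) := by
      intro s hs
      have h0 : 0 < s := lt_trans hR₁0 hs.1
      exact (((hwd s).differentiableAt).div ((hYd s h0).differentiableAt)
        (hYpos s h0).ne').differentiableWithinAt
    have hd : ∀ s ∈ Ioo R₁ T, deriv (fun s => w s / Y s) s
        = (s^((1:ℝ)-n) / (Y s)^2) * P s := by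
      intro s hs
      have h0 : 0 < s := lt_trans hR₁0 hs.1
      have hder : HasDerivAt (fun s => w s / Y s)
          ((w' s * Y s - w s * Y' s) / (Y s)^2) s :=
        (hwd s).div (hYd s h0) (hYpos s h0).ne'
      rw [hder.deriv]
      have hss : s^((1:ℝ)-n) * s^(n-1) = 1 := by
        rw [← Real.rpow_add h0]; norm_num
      rw [div_mul_eq_mul_div]
      congr 1
      rw [hPdef, ← mul_assoc, hss, one_mul]
    have hρpos : ∀ s ∈ Ioo R₁ T, 0 < s^((1:ℝ)-n) / (Y s)^2 := by
      intro s hs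
      have h0 : 0 < s := lt_trans hR₁0 hs.1
      have := hYpos s h0
      have := Real.rpow_pos_of_pos h0 ((1:ℝ)-n)
      positivity
    have hend := endpoint_max hgc hgd hd hρpos
      (hPmono.mono (fun s hs => hs.1.le)) r ⟨hr, hrT⟩
    have : w r / Y r ≤ 1 := le_trans hend (max_le hgR₁ hgT)
    have := (div_le_one (hYpos r h0r)).mp this
    simpa [hY] using this
  -- take ε → 0
  intro r hr
  have h0 : 0 < r := lt_of_lt_of_le hR₁0 hr
  have hrδ : r ^ (-δ) ≤ 1 :=
    Real.rpow_le_one_of_one_le_of_nonpos (le_trans hR₁ hr) (by rw [hδ]; norm_num)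
  by_contra hcon
  push_neg at hcon
  have hd0 : 0 < w r - A * r ^ (-γ) := by
    simpa [hA] using sub_pos.mpr hcon
  have h1 := main ((w r - A * r ^ (-γ))/2) (half_pos hd0) r hr
  have h2 : (w r - A * r ^ (-γ))/2 * r ^ (-δ) ≤ (w r - A * r ^ (-γ))/2 :=
    mul_le_of_le_one_right (half_pos hd0).le hrδ
  linarith
theorem ode_decay (n p K M R₁ : ℝ) (w w' w'' f : ℝ → ℝ)
    (hn : 5 ≤ n) (hp : p = 2*n/(n-2)) (hK : 0 < K) (hM : 0 < M) (hR₁ : 1 ≤ R₁)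
    (hwd : ∀ r, HasDerivAt w (w' r) r)
    (hwd2 : ∀ r, HasDerivAt w' (w'' r) r)
    (hwpos : ∀ r, 0 < r → 0 < w r)
    (hode : ∀ r, 0 < r → w'' r + (n-1)/r * w' r = - f r)
    (hfK : ∀ r, 0 < r → f r ≤ K * w r ^ (p-1))
    (hf0 : ∀ r, 0 < r → 0 ≤ f r)
    (hwM : ∀ r, R₁ ≤ r → w r ≤ M * r ^ (-(n-2)/2))
    (hsmall : K * M ^ (4/(n-2)) ≤ 1/2) :
    ∃ C, 0 < C ∧ ∀ r, R₁ ≤ r → w r ≤ C * r ^ (2-n) ∧ -(w' r) ≤ C * r ^ (1-n) := by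
  have hn2 : (0:ℝ) < n - 2 := by linarith
  have hR₁0 : (0:ℝ) < R₁ := by linarith
  have hcomp := ode_comp n p K M R₁ w w' w'' f hn hp hK hM hR₁ hwd hwd2 hwpos
    hode hfK hf0 hwM hsmall
  set γ : ℝ := n - 5/2 with hγ
  set A : ℝ := w R₁ * R₁ ^ γ with hA
  have hApos : 0 < A := mul_pos (hwpos R₁ hR₁0) (Real.rpow_pos_of_pos hR₁0 γ)
  have hp1 : p - 1 = (n+2)/(n-2) := by rw [hp]; field_simp; ring
  have hp1pos : 0 < p - 1 := by rw [hp1]; positivity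
  set m : ℝ := γ*(p-1) - n with hm
  have hmpos : 0 < m := by
    have e : m = (3/2*n - 5)/(n-2) := by rw [hm, hγ, hp1]; field_simp; ring
    rw [e]
    have : (0:ℝ) < 3/2*n - 5 := by linarith
    positivity
  set B : ℝ := K * A^(p-1) / m with hB
  have hBpos : 0 < B := by
    have := Real.rpow_pos_of_pos hApos (p-1); positivity
  set Q : ℝ → ℝ := fun r => -(r^(n-1) * w' r) + B * r^(-m) with hQ
  have hQd : ∀ s, 0 < s → HasDerivAt Q
      (-((n-1)*s^(n-1-1) * w' s + s^(n-1) * w'' s) + B * (-m * s^(-m-1))) s :=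
    fun s h0 =>
      (((Real.hasDerivAt_rpow_const (p := n-1) (Or.inl h0.ne')).mul (hwd2 s)).neg).add
        ((Real.hasDerivAt_rpow_const (p := -m) (Or.inl h0.ne')).const_mul B)
  have hQ'le : ∀ s, R₁ ≤ s →
      -((n-1)*s^(n-1-1) * w' s + s^(n-1) * w'' s) + B * (-m * s^(-m-1)) ≤ 0 := by
    intro s hs
    have h0 : 0 < s := lt_of_lt_of_le hR₁0 hs
    have hsn : 0 < s^(n-1) := Real.rpow_pos_of_pos h0 _
    have hde := hode s h0
    rw [div_eq_mul_inv] at hde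
    have he : -((n-1)*s^(n-1-1) * w' s + s^(n-1) * w'' s) = s^(n-1) * f s := by
      rw [rpow_sub_one'' h0]
      linear_combination (-(s^(n-1))) * hde
    have h1 : f s ≤ K * (A * s^(-γ))^(p-1) := by
      refine (hfK s h0).trans (mul_le_mul_of_nonneg_left ?_ hK.le)
      exact Real.rpow_le_rpow (hwpos s h0).le (hcomp s hs) hp1pos.le
    have h2 : (A * s^(-γ))^(p-1) = A^(p-1) * s^(-γ*(p-1)) := by
      rw [Real.mul_rpow hApos.le (Real.rpow_pos_of_pos h0 _).le, ← Real.rpow_mul h0.le]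
    have h3 : s^(n-1) * s^(-γ*(p-1)) = s^(-m-1) := by
      rw [← Real.rpow_add h0]
      congr 1
      rw [hm]; ring
    have h4 : s^(n-1) * f s ≤ K * A^(p-1) * s^(-m-1) := by
      calc s^(n-1) * f s ≤ s^(n-1) * (K * (A^(p-1) * s^(-γ*(p-1)))) := by
            apply mul_le_mul_of_nonneg_left _ hsn.le
            rw [← h2]; exact h1
        _ = K * A^(p-1) * (s^(n-1) * s^(-γ*(p-1))) := by ring
        _ = K * A^(p-1) * s^(-m-1) := by rw [h3]
    have h5 : B * (-m * s^(-m-1)) = -(K * A^(p-1) * s^(-m-1)) := by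
      rw [hB]; field_simp
    rw [he, h5]
    linarith
  have hQanti : AntitoneOn Q (Ici R₁) := by
    apply antitoneOn_of_deriv_nonpos (convex_Ici R₁)
    · exact fun s hs => (hQd s (lt_of_lt_of_le hR₁0 hs)).continuousAt.continuousWithinAt
    · intro s hs
      rw [interior_Ici] at hs
      exact (hQd s (lt_trans hR₁0 hs)).differentiableAt.differentiableWithinAt
    · intro s hs
      rw [interior_Ici] at hs
      rw [(hQd s (lt_trans hR₁0 hs)).deriv]
      exact hQ'le s hs.le
  set C₂ : ℝ := max (Q R₁) 1 with hC₂
  have hC₂pos : (0:ℝ) < C₂ := lt_of_lt_of_le one_pos (le_max_right _ _)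
  have hHbound : ∀ r, R₁ ≤ r → -(r^(n-1) * w' r) ≤ C₂ := by
    intro r hr
    have h0 : 0 < r := lt_of_lt_of_le hR₁0 hr
    have h1 : Q r ≤ Q R₁ := hQanti (Set.self_mem_Ici) hr hr
    have h2 : 0 < B * r^(-m) := mul_pos hBpos (Real.rpow_pos_of_pos h0 _)
    have h3 : -(r^(n-1) * w' r) = Q r - B * r^(-m) := by rw [hQ]; ring
    rw [h3]
    have := le_max_left (Q R₁) 1
    linarith
  have hgrad : ∀ r, R₁ ≤ r → -(w' r) ≤ C₂ * r^((1:ℝ)-n) := by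
    intro r hr
    have h0 : 0 < r := lt_of_lt_of_le hR₁0 hr
    have hinv : r^(n-1) * r^((1:ℝ)-n) = 1 := by
      rw [← Real.rpow_add h0]; norm_num
    have h1 : -(w' r) = -(r^(n-1) * w' r) * r^((1:ℝ)-n) := by
      have : -(r^(n-1) * w' r) * r^((1:ℝ)-n) = -(w' r) * (r^(n-1) * r^((1:ℝ)-n)) := by ring
      rw [this, hinv, mul_one]
    rw [h1]
    exact mul_le_mul_of_nonneg_right (hHbound r hr) (Real.rpow_pos_of_pos h0 _).le
  set C₃ : ℝ := C₂/(n-2) with hC₃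
  have hC₃pos : 0 < C₃ := div_pos hC₂pos hn2
  set S : ℝ → ℝ := fun r => w r - C₃ * r^(2-n) with hS
  have hSd : ∀ r, 0 < r → HasDerivAt S (w' r - C₃ * ((2-n) * r^(2-n-1))) r :=
    fun r h0 => (hwd r).sub
      ((Real.hasDerivAt_rpow_const (p := 2-n) (Or.inl h0.ne')).const_mul C₃)
  have hS'0 : ∀ r, R₁ ≤ r → 0 ≤ w' r - C₃ * ((2-n) * r^(2-n-1)) := by
    intro r hr
    have h0 : 0 < r := lt_of_lt_of_le hR₁0 hr
    have he : C₃ * ((2-n) * r^(2-n-1)) = -(C₂ * r^((1:ℝ)-n)) := by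
      rw [show (2-n-1 : ℝ) = (1:ℝ)-n by ring, hC₃]
      field_simp
      ring
    rw [he]
    have := hgrad r hr
    linarith
  have hSmono : MonotoneOn S (Ici R₁) := by
    apply monotoneOn_of_deriv_nonneg (convex_Ici R₁)
    · exact fun s hs => (hSd s (lt_of_lt_of_le hR₁0 hs)).continuousAt.continuousWithinAt
    · intro s hs
      rw [interior_Ici] at hs
      exact (hSd s (lt_trans hR₁0 hs)).differentiableAt.differentiableWithinAt
    · intro s hs
      rw [interior_Ici] at hs
      rw [(hSd s (lt_trans hR₁0 hs)).deriv]
      exact hS'0 s hs.le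
  have hwlim : Tendsto w atTop (nhds 0) := by
    apply squeeze_zero' (g := fun r => M * r ^ (-(n-2)/2))
    · filter_upwards [eventually_ge_atTop (max R₁ 1)] with r hr
      exact (hwpos r (lt_of_lt_of_le hR₁0 ((le_max_left _ _).trans hr))).le
    · filter_upwards [eventually_ge_atTop (max R₁ 1)] with r hr
      exact hwM r ((le_max_left _ _).trans hr)
    · have := (tendsto_rpow_neg_atTop (by linarith : (0:ℝ) < (n-2)/2)).const_mul M
      simp only [mul_zero] at this
      convert this using 2 with r
      · congr 1; ring
  have hSlim : Tendsto S atTop (nhds 0) := by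
    have h2 : Tendsto (fun r : ℝ => C₃ * r^(2-n)) atTop (nhds 0) := by
      have := (tendsto_rpow_neg_atTop (by linarith : (0:ℝ) < n-2)).const_mul C₃
      simp only [mul_zero] at this
      convert this using 2 with r
      · congr 1; ring
    have := hwlim.sub h2
    simpa [hS] using this
  have hwbound : ∀ r, R₁ ≤ r → w r ≤ C₃ * r^(2-n) := by
    intro r hr
    have := nonpos_of_monotoneOn_tendsto hSmono hSlim r hr
    simp only [hS] at this
    linarith [this]
  refine ⟨max C₃ C₂, lt_of_lt_of_le hC₃pos (le_max_left _ _), fun r hr => ?_⟩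
  have h0 : 0 < r := lt_of_lt_of_le hR₁0 hr
  constructor
  · exact (hwbound r hr).trans (mul_le_mul_of_nonneg_right (le_max_left _ _)
      (Real.rpow_pos_of_pos h0 _).le)
  · exact (hgrad r hr).trans (mul_le_mul_of_nonneg_right (le_max_right _ _)
      (Real.rpow_pos_of_pos h0 _).le)

end OneD

section Meas
open Set Filter Metric

lemma deriv_nonpos_of_antitoneOn {φ : ℝ → ℝ} {r d : ℝ} (hr : 0 < r)
    (hφ : AntitoneOn φ (Ici 0)) (hd : HasDerivAt φ d r) : d ≤ 0 := by
  have h1 : Tendsto (slope φ r) (nhdsWithin r (Ioi r)) (nhds d) :=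
    (hasDerivAt_iff_tendsto_slope.mp hd).mono_left
      (nhdsWithin_mono r (fun y hy => ne_of_gt hy))
  refine le_of_tendsto h1 ?_
  filter_upwards [self_mem_nhdsWithin] with y hy
  have hy' : r < y := hy
  have : φ y ≤ φ r := hφ hr.le (hr.le.trans hy'.le) hy'.le
  rw [slope_def_field]
  exact div_nonpos_of_nonpos_of_nonneg (by linarith) (by linarith)

variable {N : ℕ}

local notation "E" => EuclideanSpace ℝ (Fin N)

lemma tail_tendsto (g : E → ℝ) (hg : Integrable g) :
    Tendsto (fun k : ℕ => ∫ y in (ball (0:E) (k:ℝ))ᶜ, g y) atTop (nhds 0) := by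
  have hmono : Monotone (fun k : ℕ => ball (0:E) (k:ℝ)) := fun a b hab =>
    ball_subset_ball (by exact_mod_cast hab)
  have hun : (⋃ k : ℕ, ball (0:E) (k:ℝ)) = univ := iUnion_ball_nat 0
  have h1 := tendsto_setIntegral_of_monotone (μ := volume)
    (s := fun k : ℕ => ball (0:E) (k:ℝ)) (fun k => measurableSet_ball) hmono
    (by rw [hun]; exact hg.integrableOn)
  rw [hun, setIntegral_univ] at h1
  have h2 : ∀ k : ℕ, ∫ y in (ball (0:E) (k:ℝ))ᶜ, g y
      = (∫ y, g y) - ∫ y in ball (0:E) (k:ℝ), g y := by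
    intro k
    have := integral_add_compl (measurableSet_ball (x := (0:E)) (ε := (k:ℝ))) hg
    linarith
  simp only [h2]
  have := (tendsto_const_nhds (x := ∫ y, g y) (f := atTop (α := ℕ))).sub h1
  simpa using this

lemma tail_anti {g : E → ℝ} (hg : Integrable g) (hg0 : ∀ x, 0 ≤ g x) {ρ₁ ρ₂ : ℝ}
    (h : ρ₁ ≤ ρ₂) :
    ∫ y in (ball (0:E) ρ₂)ᶜ, g y ≤ ∫ y in (ball (0:E) ρ₁)ᶜ, g y := by
  apply setIntegral_mono_set hg.integrableOn
    (Eventually.of_forall fun x => hg0 x)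
  exact HasSubset.Subset.eventuallyLE (compl_subset_compl.mpr (ball_subset_ball h))

lemma annulus_bound (hN : 0 < N) (p : ℝ) (hp : 0 < p)
    (U V : E → ℝ)
    (ψU ψV : ℝ → ℝ) (hψU : AntitoneOn ψU (Ici 0)) (hψV : AntitoneOn ψV (Ici 0))
    (hUrad : ∀ x, U x = ψU ‖x‖) (hVrad : ∀ x, V x = ψV ‖x‖)
    (hUpos : ∀ x, 0 < U x) (hVpos : ∀ x, 0 < V x)
    (hU2 : Integrable (fun x => U x ^ p)) (hV2 : Integrable (fun x => V x ^ p))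
    (r : ℝ) (hr : 0 < r) :
    ((ψU r + ψV r)/2) ^ p * ((r/8) ^ (N:ℝ) * (volume (ball (0:E) 1)).toReal)
      ≤ ∫ y in (ball (0:E) (r/2))ᶜ, (U y ^ p + V y ^ p) := by
  set i0 : Fin N := ⟨0, hN⟩
  set e : E := EuclideanSpace.single i0 (1:ℝ) with he
  have hne : ‖e‖ = 1 := by rw [he, EuclideanSpace.norm_single]; norm_num
  set c : E := (3*r/4) • e with hc
  have hnc : ‖c‖ = 3*r/4 := by
    rw [hc, norm_smul, hne, mul_one, Real.norm_eq_abs, abs_of_pos (by linarith)]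
  set B := ball c (r/8) with hB
  have hBle : ∀ y ∈ B, ‖y‖ ≤ r := by
    intro y hy
    have h1 : ‖y - c‖ < r/8 := by rwa [← dist_eq_norm, ← mem_ball]
    have h2 : ‖y‖ ≤ ‖c‖ + ‖y - c‖ := by
      calc ‖y‖ = ‖c + (y - c)‖ := by rw [add_sub_cancel]
        _ ≤ ‖c‖ + ‖y - c‖ := norm_add_le _ _
    rw [hnc] at h2; linarith
  have hBcompl : B ⊆ (ball (0:E) (r/2))ᶜ := by
    intro y hy
    have h1 : ‖y - c‖ < r/8 := by rwa [← dist_eq_norm, ← mem_ball]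
    have h2 : ‖c‖ - ‖y‖ ≤ ‖c - y‖ := norm_sub_norm_le _ _
    rw [norm_sub_rev] at h2
    rw [hnc] at h2
    simp only [mem_compl_iff, mem_ball, dist_zero_right, not_lt]
    linarith
  have hψUr : ψU r = U (r • e) := by
    rw [hUrad (r • e), norm_smul, hne, mul_one, Real.norm_eq_abs, abs_of_pos hr]
  have hψVr : ψV r = V (r • e) := by
    rw [hVrad (r • e), norm_smul, hne, mul_one, Real.norm_eq_abs, abs_of_pos hr]
  have hψU0 : 0 < ψU r := hψUr ▸ hUpos _
  have hψV0 : 0 < ψV r := hψVr ▸ hVpos _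
  have hlow : ∀ y ∈ B, ((ψU r + ψV r)/2) ^ p ≤ U y ^ p + V y ^ p := by
    intro y hy
    have hyr : ‖y‖ ≤ r := hBle y hy
    have hU : ψU r ≤ U y := by
      rw [hUrad y]; exact hψU (norm_nonneg y) hr.le hyr
    have hV : ψV r ≤ V y := by
      rw [hVrad y]; exact hψV (norm_nonneg y) hr.le hyr
    have hmax : (ψU r + ψV r)/2 ≤ max (U y) (V y) := by
      rcases le_total (U y) (V y) with h | h
      · rw [max_eq_right h]; linarith
      · rw [max_eq_left h]; linarith
    have h1 : ((ψU r + ψV r)/2) ^ p ≤ (max (U y) (V y)) ^ p :=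
      Real.rpow_le_rpow (by linarith) hmax hp.le
    rcases max_cases (U y) (V y) with ⟨hm, _⟩ | ⟨hm, _⟩ <;> rw [hm] at h1
    · exact h1.trans (le_add_of_nonneg_right (Real.rpow_nonneg (hVpos y).le _))
    · exact h1.trans (le_add_of_nonneg_left (Real.rpow_nonneg (hUpos y).le _))
  have hIntOn : IntegrableOn (fun y => U y ^ p + V y ^ p) B volume :=
    (hU2.add hV2).integrableOn
  have hconst : IntegrableOn (fun _ : E => ((ψU r + ψV r)/2) ^ p) B volume := by
    exact integrableOn_const measure_ball_lt_top.ne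
  have h1 : ∫ _ in B, ((ψU r + ψV r)/2) ^ p ≤ ∫ y in B, (U y ^ p + V y ^ p) :=
    setIntegral_mono_on hconst hIntOn measurableSet_ball hlow
  have h2 : ∫ y in B, (U y ^ p + V y ^ p) ≤ ∫ y in (ball (0:E) (r/2))ᶜ, (U y ^ p + V y ^ p) := by
    apply setIntegral_mono_set (hU2.add hV2).integrableOn
      (Eventually.of_forall fun x =>
        add_nonneg (Real.rpow_nonneg (hUpos x).le _) (Real.rpow_nonneg (hVpos x).le _))
    exact HasSubset.Subset.eventuallyLE hBcompl
  haveI : Nontrivial (EuclideanSpace ℝ (Fin N)) := by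
    refine nontrivial_of_ne 0 e (fun h => ?_)
    rw [← h] at hne; simp at hne
  have h3 : ∫ _ in B, ((ψU r + ψV r)/2) ^ p
      = ((r/8) ^ (N:ℝ) * (volume (ball (0:E) 1)).toReal) * ((ψU r + ψV r)/2) ^ p := by
    rw [setIntegral_const, smul_eq_mul]
    congr 1
    rw [measureReal_def, hB, (volume : Measure (EuclideanSpace ℝ (Fin N))).addHaar_ball c (by linarith : (0:ℝ) ≤ r/8), ENNReal.toReal_mul,
      ENNReal.toReal_ofReal (by positivity), finrank_euclideanSpace_fin,
      ← Real.rpow_natCast (r/8) N]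
  calc ((ψU r + ψV r)/2) ^ p * ((r/8) ^ (N:ℝ) * (volume (ball (0:E) 1)).toReal)
      = ∫ _ in B, ((ψU r + ψV r)/2) ^ p := by rw [h3]; ring
    _ ≤ _ := h1.trans h2

end Meas

open Set Filter Metric in
theorem stmt_15 (N : ℕ) (hN : 5 ≤ N)
    (μ₁ μ₂ β : ℝ) (hμ₁ : 0 < μ₁) (hμ₂ : 0 < μ₂) (hβ : 0 < β)
    (twoStar : ℝ) (hts : twoStar = 2 * (N : ℝ) / ((N : ℝ) - 2))
    (U V : EuclideanSpace ℝ (Fin N) → ℝ)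
    (hU : ContDiff ℝ 2 U) (hV : ContDiff ℝ 2 V)
    (hUpos : ∀ x, 0 < U x) (hVpos : ∀ x, 0 < V x)
    (hUrad : ∃ φ : ℝ → ℝ, AntitoneOn φ (Set.Ici 0) ∧ ∀ x, U x = φ ‖x‖)
    (hVrad : ∃ φ : ℝ → ℝ, AntitoneOn φ (Set.Ici 0) ∧ ∀ x, V x = φ ‖x‖)
    (hU1 : Integrable (fun x => ‖fderiv ℝ U x‖ ^ 2))
    (hV1 : Integrable (fun x => ‖fderiv ℝ V x‖ ^ 2))
    (hU2 : Integrable (fun x => U x ^ twoStar))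
    (hV2 : Integrable (fun x => V x ^ twoStar))
    (heqU : ∀ x, -lap U x =
      μ₁ * U x ^ (twoStar - 1) + β * U x ^ (twoStar / 2 - 1) * V x ^ (twoStar / 2))
    (heqV : ∀ x, -lap V x =
      μ₂ * V x ^ (twoStar - 1) + β * V x ^ (twoStar / 2 - 1) * U x ^ (twoStar / 2)) :
    ∃ C > (0 : ℝ), ∀ x,
      U x + V x ≤ C * (1 + ‖x‖) ^ (2 - (N : ℝ)) ∧
      ‖fderiv ℝ U x‖ + ‖fderiv ℝ V x‖ ≤ C * (1 + ‖x‖) ^ (1 - (N : ℝ)) := by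
  have hNpos : 0 < N := by omega
  set n : ℝ := (N : ℝ) with hn_def
  have hn : (5:ℝ) ≤ n := by rw [hn_def]; exact_mod_cast hN
  have hn2 : (0:ℝ) < n - 2 := by linarith
  have hts1 : 0 < twoStar - 1 := by rw [hts, show 2*n/(n-2) - 1 = (n+2)/(n-2) by field_simp; ring]; positivity
  have htsp : 0 < twoStar := by linarith
  have hts2 : 0 < twoStar/2 - 1 := by
    rw [hts, show (2*n/(n-2))/2 - 1 = 2/(n-2) by field_simp; ring]; positivity
  have hts3 : 0 < twoStar/2 := by linarith
  obtain ⟨ψU, hψU, hUrad'⟩ := hUrad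
  obtain ⟨ψV, hψV, hVrad'⟩ := hVrad
  set i0 : Fin N := ⟨0, hNpos⟩ with hi0
  set e : EuclideanSpace ℝ (Fin N) := EuclideanSpace.single i0 (1:ℝ) with he
  have hne : ‖e‖ = 1 := by rw [he, EuclideanSpace.norm_single]; norm_num
  have hnorm_smul : ∀ r : ℝ, 0 ≤ r → ‖r • e‖ = r := fun r hr => by
    rw [norm_smul, hne, mul_one, Real.norm_eq_abs, abs_of_nonneg hr]
  set φU : ℝ → ℝ := fun r => U (r • e) with hφU
  set φV : ℝ → ℝ := fun r => V (r • e) with hφV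
  have hsm : ContDiff ℝ 2 (fun r : ℝ => r • e) := contDiff_id.smul contDiff_const
  have hφUc : ContDiff ℝ 2 φU := hU.comp hsm
  have hφVc : ContDiff ℝ 2 φV := hV.comp hsm
  have hφUr : ∀ r : ℝ, 0 ≤ r → φU r = ψU r := fun r hr => by
    rw [hφU]; simp only; rw [hUrad' (r • e), hnorm_smul r hr]
  have hφVr : ∀ r : ℝ, 0 ≤ r → φV r = ψV r := fun r hr => by
    rw [hφV]; simp only; rw [hVrad' (r • e), hnorm_smul r hr]
  have hUφ : ∀ x, U x = φU ‖x‖ := fun x => by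
    rw [hφUr ‖x‖ (norm_nonneg x), hUrad' x]
  have hVφ : ∀ x, V x = φV ‖x‖ := fun x => by
    rw [hφVr ‖x‖ (norm_nonneg x), hVrad' x]
  have hφUanti : AntitoneOn φU (Ici 0) := fun a ha b hb hab => by
    rw [hφUr a ha, hφUr b hb]; exact hψU ha hb hab
  have hφVanti : AntitoneOn φV (Ici 0) := fun a ha b hb hab => by
    rw [hφVr a ha, hφVr b hb]; exact hψV ha hb hab
  have hdU : Differentiable ℝ φU := hφUc.differentiable (by norm_num)
  have hdV : Differentiable ℝ φV := hφVc.differentiable (by norm_num)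
  have hdU2 : Differentiable ℝ (deriv φU) := by
    have := (contDiff_succ_iff_deriv (n := 1)).mp (by exact_mod_cast hφUc)
    exact this.2.2.differentiable one_ne_zero
  have hdV2 : Differentiable ℝ (deriv φV) := by
    have := (contDiff_succ_iff_deriv (n := 1)).mp (by exact_mod_cast hφVc)
    exact this.2.2.differentiable one_ne_zero
  set w : ℝ → ℝ := fun r => φU r + φV r with hw
  set w1 : ℝ → ℝ := fun r => deriv φU r + deriv φV r with hw1
  set w2 : ℝ → ℝ := fun r => deriv (deriv φU) r + deriv (deriv φV) r with hw2
  set fr : ℝ → ℝ := fun r =>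
    (μ₁ * φU r ^ (twoStar - 1) + β * φU r ^ (twoStar/2 - 1) * φV r ^ (twoStar/2))
    + (μ₂ * φV r ^ (twoStar - 1) + β * φV r ^ (twoStar/2 - 1) * φU r ^ (twoStar/2)) with hfr
  have hwd : ∀ r, HasDerivAt w (w1 r) r := fun r =>
    ((hdU r).hasDerivAt).add ((hdV r).hasDerivAt)
  have hwd2 : ∀ r, HasDerivAt w1 (w2 r) r := fun r =>
    ((hdU2 r).hasDerivAt).add ((hdV2 r).hasDerivAt)
  have hwpos : ∀ r, 0 < r → 0 < w r := fun r _ => add_pos (hUpos _) (hVpos _)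
  have hw'U : ∀ r, 0 < r → deriv φU r ≤ 0 := fun r hr =>
    deriv_nonpos_of_antitoneOn hr hφUanti (hdU r).hasDerivAt
  have hw'V : ∀ r, 0 < r → deriv φV r ≤ 0 := fun r hr =>
    deriv_nonpos_of_antitoneOn hr hφVanti (hdV r).hasDerivAt
  have hxne : ∀ r : ℝ, 0 < r → (r • e) ≠ 0 := fun r hr h => by
    have h2 := hnorm_smul r hr.le
    rw [h, norm_zero] at h2; linarith
  have hlapU : ∀ r, 0 < r →
      lap U (r • e) = deriv (deriv φU) r + (n-1)/r * deriv φU r := fun r hr => by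
    have := radial_lap (f := U) (φ := φU) hφUc hUφ (hxne r hr)
    rwa [hnorm_smul r hr.le] at this
  have hlapV : ∀ r, 0 < r →
      lap V (r • e) = deriv (deriv φV) r + (n-1)/r * deriv φV r := fun r hr => by
    have := radial_lap (f := V) (φ := φV) hφVc hVφ (hxne r hr)
    rwa [hnorm_smul r hr.le] at this
  have hode : ∀ r, 0 < r → w2 r + (n-1)/r * w1 r = - fr r := by
    intro r hr
    have h1 := heqU (r • e)
    have h2 := heqV (r • e)
    rw [hlapU r hr] at h1
    rw [hlapV r hr] at h2
    have eU : U (r • e) = φU r := rfl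
    have eV : V (r • e) = φV r := rfl
    rw [eU, eV] at h1 h2
    simp only [hw2, hw1, hfr]
    linarith
  have hf0 : ∀ r, 0 < r → 0 ≤ fr r := by
    intro r hr
    have h1 := (hUpos (r • e)).le
    have h2 := (hVpos (r • e)).le
    have eU : (0:ℝ) ≤ φU r := h1
    have eV : (0:ℝ) ≤ φV r := h2
    simp only [hfr]
    have := Real.rpow_nonneg eU (twoStar - 1)
    have := Real.rpow_nonneg eV (twoStar - 1)
    have := mul_nonneg (Real.rpow_nonneg eU (twoStar/2-1)) (Real.rpow_nonneg eV (twoStar/2))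
    have := mul_nonneg (Real.rpow_nonneg eV (twoStar/2-1)) (Real.rpow_nonneg eU (twoStar/2))
    positivity
  set K : ℝ := μ₁ + μ₂ + 2*β with hK
  have hKpos : 0 < K := by positivity
  have hfK : ∀ r, 0 < r → fr r ≤ K * w r ^ (twoStar - 1) := by
    intro r hr
    have hU0 : (0:ℝ) < φU r := hUpos (r • e)
    have hV0 : (0:ℝ) < φV r := hVpos (r • e)
    have hw0 : (0:ℝ) < w r := hwpos r hr
    have hUw : φU r ≤ w r := le_add_of_nonneg_right hV0.le
    have hVw : φV r ≤ w r := le_add_of_nonneg_left hU0.le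
    have t1 : φU r ^ (twoStar - 1) ≤ w r ^ (twoStar - 1) :=
      Real.rpow_le_rpow hU0.le hUw hts1.le
    have t2 : φV r ^ (twoStar - 1) ≤ w r ^ (twoStar - 1) :=
      Real.rpow_le_rpow hV0.le hVw hts1.le
    have hsplit : w r ^ (twoStar - 1) = w r ^ (twoStar/2 - 1) * w r ^ (twoStar/2) := by
      rw [← Real.rpow_add hw0]; congr 1; ring
    have t3 : φU r ^ (twoStar/2 - 1) * φV r ^ (twoStar/2) ≤ w r ^ (twoStar - 1) := by
      rw [hsplit]
      exact mul_le_mul (Real.rpow_le_rpow hU0.le hUw hts2.le)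
        (Real.rpow_le_rpow hV0.le hVw hts3.le)
        (Real.rpow_nonneg hV0.le _) (Real.rpow_nonneg hw0.le _)
    have t4 : φV r ^ (twoStar/2 - 1) * φU r ^ (twoStar/2) ≤ w r ^ (twoStar - 1) := by
      rw [hsplit]
      exact mul_le_mul (Real.rpow_le_rpow hV0.le hVw hts2.le)
        (Real.rpow_le_rpow hU0.le hUw hts3.le)
        (Real.rpow_nonneg hU0.le _) (Real.rpow_nonneg hw0.le _)
    simp only [hfr, hK]
    nlinarith [mul_le_mul_of_nonneg_left t1 hμ₁.le, mul_le_mul_of_nonneg_left t2 hμ₂.le,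
      mul_le_mul_of_nonneg_left t3 hβ.le, mul_le_mul_of_nonneg_left t4 hβ.le]
  set q : ℝ := (n-2)/2 with hq
  set η : ℝ := (1/(2*K)) ^ ((n-2)/4) with hη
  have hηpos : 0 < η := Real.rpow_pos_of_pos (by positivity) _
  have hsmall : K * η ^ (4/(n-2)) ≤ 1/2 := by
    have e1 : η ^ (4/(n-2)) = (1/(2*K)) ^ (((n-2)/4) * (4/(n-2))) := by
      rw [hη, ← Real.rpow_mul (by positivity : (0:ℝ) ≤ 1/(2*K))]
    have e2 : ((n-2)/4) * (4/(n-2)) = 1 := by field_simp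
    rw [e1, e2, Real.rpow_one]
    rw [show K * (1/(2*K)) = 1/2 by field_simp]
  set cN : ℝ := 2 * (8:ℝ) ^ q with hcN
  have hcNpos : 0 < cN := by
    have := Real.rpow_pos_of_pos (by norm_num : (0:ℝ) < 8) q; positivity
  set v₀ : ℝ := (volume (ball (0 : EuclideanSpace ℝ (Fin N)) 1)).toReal with hv₀def
  have hv₀ : 0 < v₀ := ENNReal.toReal_pos
    (measure_ball_pos volume (0 : EuclideanSpace ℝ (Fin N)) one_pos).ne'
    measure_ball_lt_top.ne
  set τ : ℝ := v₀ * (η/cN) ^ twoStar with hτdef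
  have hτpos : 0 < τ := by
    have := Real.rpow_pos_of_pos (div_pos hηpos hcNpos) twoStar; positivity
  set g : EuclideanSpace ℝ (Fin N) → ℝ := fun x => U x ^ twoStar + V x ^ twoStar with hg
  have hgint : Integrable g := hU2.add hV2
  have hg0 : ∀ x, 0 ≤ g x := fun x =>
    add_nonneg (Real.rpow_nonneg (hUpos x).le _) (Real.rpow_nonneg (hVpos x).le _)
  obtain ⟨k, hklt, hk1⟩ := (((tail_tendsto g hgint).eventually_lt_const hτpos).and
    (eventually_ge_atTop 1)).exists
  have hk1' : (1:ℝ) ≤ (k:ℝ) := by exact_mod_cast hk1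
  set R₁ : ℝ := 2 * (k:ℝ) with hR₁def
  have hR₁ : 1 ≤ R₁ := by rw [hR₁def]; linarith
  have hR₁0 : 0 < R₁ := by linarith
  have hwM : ∀ r, R₁ ≤ r → w r ≤ η * r ^ (-(n-2)/2) := by
    intro r hr
    have h0 : 0 < r := lt_of_lt_of_le hR₁0 hr
    have hann := annulus_bound hNpos twoStar htsp U V ψU ψV hψU hψV hUrad' hVrad'
      hUpos hVpos hU2 hV2 r h0
    have hψw : ψU r + ψV r = w r := by rw [← hφUr r h0.le, ← hφVr r h0.le]
    have htail : (∫ y in (ball (0 : EuclideanSpace ℝ (Fin N)) (r/2))ᶜ, g y) ≤ τ := by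
      refine le_trans (tail_anti hgint hg0 (by rw [hR₁def] at hr; linarith : (k:ℝ) ≤ r/2)) hklt.le
    have hann2 : (w r / 2) ^ twoStar * ((r/8) ^ n * v₀) ≤ τ := by
      rw [← hψw]
      exact le_trans hann htail
    -- algebra to extract the bound
    have hw0 : 0 < w r := hwpos r h0
    by_contra hcon
    push_neg at hcon
    have hrq : 0 < η * r ^ (-(n-2)/2) := by
      have := Real.rpow_pos_of_pos h0 (-(n-2)/2); positivity
    have hlt : (η * r ^ (-(n-2)/2)) ^ twoStar < (w r) ^ twoStar :=
      Real.rpow_lt_rpow hrq.le hcon htsp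
    -- compute (η * r ^ (-(n-2)/2)) ^ twoStar = η^twoStar * r^(-n)
    have hqts : q * twoStar = n := by
      rw [hq, hts]; field_simp
    have elhs : (η * r ^ (-(n-2)/2)) ^ twoStar = η ^ twoStar * r ^ (-n) := by
      rw [Real.mul_rpow hηpos.le (Real.rpow_pos_of_pos h0 _).le,
        ← Real.rpow_mul h0.le]
      congr 2
      rw [show -(n-2)/2 = -q by rw [hq]; ring]
      rw [show -q * twoStar = -(q * twoStar) by ring, hqts]
    -- from hann2 : (w r)^twoStar ≤ η^twoStar * r^(-n)
    have hpow2 : (0:ℝ) < (2:ℝ) ^ twoStar := Real.rpow_pos_of_pos two_pos _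
    have hpow8 : (0:ℝ) < (8:ℝ) ^ n := Real.rpow_pos_of_pos (by norm_num) _
    have hrn : (0:ℝ) < r ^ n := Real.rpow_pos_of_pos h0 _
    have e5 : (w r / 2) ^ twoStar = w r ^ twoStar / 2 ^ twoStar :=
      Real.div_rpow hw0.le (by norm_num : (0:ℝ) ≤ 2) twoStar
    have e6 : (r/8) ^ n = r ^ n / 8 ^ n := Real.div_rpow h0.le (by norm_num : (0:ℝ) ≤ 8) n
    have e7 : cN ^ twoStar = 2 ^ twoStar * 8 ^ n := by
      rw [hcN, Real.mul_rpow (by norm_num) (Real.rpow_pos_of_pos (by norm_num : (0:ℝ)<8) q).le,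
        ← Real.rpow_mul (by norm_num : (0:ℝ) ≤ 8), hqts]
    have e8 : (η/cN) ^ twoStar = η ^ twoStar / (2 ^ twoStar * 8 ^ n) := by
      rw [Real.div_rpow hηpos.le hcNpos.le, e7]
    have hfinal : w r ^ twoStar ≤ η ^ twoStar * r ^ (-n) := by
      rw [e5, e6] at hann2
      rw [hτdef, e8] at hann2
      have hfac : (0:ℝ) < v₀/(2 ^ twoStar * 8 ^ n) := by positivity
      have h10 : w r ^ twoStar * r ^ n * (v₀/(2 ^ twoStar * 8 ^ n))
          ≤ η ^ twoStar * (v₀/(2 ^ twoStar * 8 ^ n)) := by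
        calc w r ^ twoStar * r ^ n * (v₀/(2 ^ twoStar * 8 ^ n))
            = w r ^ twoStar / 2 ^ twoStar * (r ^ n / 8 ^ n * v₀) := by ring
          _ ≤ v₀ * (η ^ twoStar / (2 ^ twoStar * 8 ^ n)) := hann2
          _ = η ^ twoStar * (v₀/(2 ^ twoStar * 8 ^ n)) := by ring
      have h11 : w r ^ twoStar * r ^ n ≤ η ^ twoStar := (mul_le_mul_iff_of_pos_right hfac).mp h10
      have hrneg : r ^ (-n) = (r ^ n)⁻¹ := by
        rw [← Real.rpow_neg h0.le]
      rw [hrneg, ← div_eq_mul_inv, le_div_iff₀ hrn]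
      exact h11
    rw [elhs] at hlt
    linarith
  obtain ⟨C₀, hC₀pos, hb⟩ := ode_decay n twoStar K η R₁ w w1 w2 fr hn hts hKpos hηpos hR₁
    hwd hwd2 hwpos hode hfK hf0 hwM hsmall
-- compact-region bounds
  obtain ⟨Cb1, hCb1⟩ := (isCompact_closedBall (0 : EuclideanSpace ℝ (Fin N)) R₁).exists_bound_of_continuousOn
    ((hU.continuous.add hV.continuous).continuousOn)
  obtain ⟨Cb2, hCb2⟩ := (isCompact_closedBall (0 : EuclideanSpace ℝ (Fin N)) R₁).exists_bound_of_continuousOn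
    (((hU.continuous_fderiv (by norm_num)).norm.add
      ((hV.continuous_fderiv (by norm_num)).norm)).continuousOn)
  have hmem0 : (0 : EuclideanSpace ℝ (Fin N)) ∈ closedBall (0 : EuclideanSpace ℝ (Fin N)) R₁ :=
    mem_closedBall_self hR₁0.le
  have hCb1' : 0 ≤ Cb1 := le_trans (norm_nonneg _) (hCb1 0 hmem0)
  have hCb2' : 0 ≤ Cb2 := le_trans (norm_nonneg _) (hCb2 0 hmem0)
  have h1R : (0:ℝ) < 1 + R₁ := by linarith
  set Cf : ℝ := max (max (C₀ * 2^(n-2)) (C₀ * 2^(n-1)))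
    (max (Cb1 * (1+R₁)^(n-2)) (Cb2 * (1+R₁)^(n-1))) + 1 with hCf
  have hM1 : C₀ * (2:ℝ)^(n-2) ≤ Cf := by
    have := (le_max_left (C₀ * (2:ℝ)^(n-2)) (C₀ * 2^(n-1))).trans
      (le_max_left _ (max (Cb1 * (1+R₁)^(n-2)) (Cb2 * (1+R₁)^(n-1))))
    rw [hCf]; linarith
  have hM2 : C₀ * (2:ℝ)^(n-1) ≤ Cf := by
    have := (le_max_right (C₀ * (2:ℝ)^(n-2)) (C₀ * 2^(n-1))).trans
      (le_max_left _ (max (Cb1 * (1+R₁)^(n-2)) (Cb2 * (1+R₁)^(n-1))))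
    rw [hCf]; linarith
  have hM3 : Cb1 * (1+R₁)^(n-2) ≤ Cf := by
    have := (le_max_left (Cb1 * (1+R₁)^(n-2)) (Cb2 * (1+R₁)^(n-1))).trans
      (le_max_right (max (C₀ * 2^(n-2)) (C₀ * 2^(n-1))) _)
    rw [hCf]; linarith
  have hM4 : Cb2 * (1+R₁)^(n-1) ≤ Cf := by
    have := (le_max_right (Cb1 * (1+R₁)^(n-2)) (Cb2 * (1+R₁)^(n-1))).trans
      (le_max_right (max (C₀ * 2^(n-2)) (C₀ * 2^(n-1))) _)
    rw [hCf]; linarith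
  have hCfpos : 0 < Cf := by
    have h0 : (0:ℝ) < C₀ * 2^(n-2) :=
      mul_pos hC₀pos (Real.rpow_pos_of_pos two_pos _)
    linarith [h0.trans_le hM1]
  refine ⟨Cf, hCfpos, fun x => ?_⟩
  have hx1 : (0:ℝ) < 1 + ‖x‖ := by have := norm_nonneg x; linarith
  rcases le_or_gt ‖x‖ R₁ with hxR | hxR
  · -- compact region
    have hxmem : x ∈ closedBall (0 : EuclideanSpace ℝ (Fin N)) R₁ :=
      mem_closedBall_zero_iff.mpr hxR
    constructor
    · have h1 : U x + V x ≤ Cb1 := by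
        have := hCb1 x hxmem
        rw [Real.norm_eq_abs] at this
        exact (le_abs_self _).trans this
      have h2 : (1+R₁)^(2-n) ≤ (1+‖x‖)^(2-n) :=
        Real.rpow_le_rpow_of_nonpos hx1 (by linarith) (by linarith)
      calc U x + V x ≤ Cb1 := h1
        _ = Cb1 * (1+R₁)^(n-2) * (1+R₁)^(2-n) := by
            rw [mul_assoc, ← Real.rpow_add h1R, show (n-2)+(2-n) = 0 by ring,
              Real.rpow_zero, mul_one]
        _ ≤ Cb1 * (1+R₁)^(n-2) * (1+‖x‖)^(2-n) := by
            apply mul_le_mul_of_nonneg_left h2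
            positivity
        _ ≤ Cf * (1+‖x‖)^(2-n) :=
            mul_le_mul_of_nonneg_right hM3 (Real.rpow_pos_of_pos hx1 _).le
    · have h1 : ‖fderiv ℝ U x‖ + ‖fderiv ℝ V x‖ ≤ Cb2 := by
        have := hCb2 x hxmem
        rw [Real.norm_eq_abs] at this
        exact (le_abs_self _).trans this
      have h2 : (1+R₁)^(1-n) ≤ (1+‖x‖)^(1-n) :=
        Real.rpow_le_rpow_of_nonpos hx1 (by linarith) (by linarith)
      calc ‖fderiv ℝ U x‖ + ‖fderiv ℝ V x‖ ≤ Cb2 := h1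
        _ = Cb2 * (1+R₁)^(n-1) * (1+R₁)^(1-n) := by
            rw [mul_assoc, ← Real.rpow_add h1R, show (n-1)+(1-n) = 0 by ring,
              Real.rpow_zero, mul_one]
        _ ≤ Cb2 * (1+R₁)^(n-1) * (1+‖x‖)^(1-n) := by
            apply mul_le_mul_of_nonneg_left h2
            positivity
        _ ≤ Cf * (1+‖x‖)^(1-n) :=
            mul_le_mul_of_nonneg_right hM4 (Real.rpow_pos_of_pos hx1 _).le
  · -- asymptotic region
    have hr : R₁ ≤ ‖x‖ := hxR.le
    have hr0 : (0:ℝ) < ‖x‖ := lt_of_lt_of_le hR₁0 hr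
    have hr1 : (1:ℝ) ≤ ‖x‖ := hR₁.trans hr
    have hxne0 : x ≠ 0 := fun h => by rw [h, norm_zero] at hr0; exact lt_irrefl _ hr0
    obtain ⟨hb1, hb2⟩ := hb ‖x‖ hr
    have h21 : (1+‖x‖) ≤ 2*‖x‖ := by linarith
    have h24 : (2:ℝ)^(n-2) * 2^(2-n) = 1 := by
      rw [← Real.rpow_add two_pos]; norm_num
    have h24' : (2:ℝ)^(n-1) * 2^(1-n) = 1 := by
      rw [← Real.rpow_add two_pos]; norm_num
    constructor
    · have h22 : (2*‖x‖)^(2-n) ≤ (1+‖x‖)^(2-n) :=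
        Real.rpow_le_rpow_of_nonpos hx1 h21 (by linarith)
      have h23 : (2*‖x‖)^(2-n) = 2^(2-n) * ‖x‖^(2-n) :=
        Real.mul_rpow (by norm_num) (norm_nonneg x)
      have key : ‖x‖^(2-n) ≤ 2^(n-2) * (1+‖x‖)^(2-n) := by
        have := h23 ▸ h22
        calc ‖x‖^(2-n) = 2^(n-2) * (2^(2-n) * ‖x‖^(2-n)) := by
              rw [← mul_assoc, h24, one_mul]
          _ ≤ 2^(n-2) * (1+‖x‖)^(2-n) := by
              apply mul_le_mul_of_nonneg_left this
              positivity
      calc U x + V x = w ‖x‖ := by rw [hUφ x, hVφ x]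
        _ ≤ C₀ * ‖x‖^(2-n) := hb1
        _ ≤ C₀ * (2^(n-2) * (1+‖x‖)^(2-n)) := mul_le_mul_of_nonneg_left key hC₀pos.le
        _ = C₀ * 2^(n-2) * (1+‖x‖)^(2-n) := by ring
        _ ≤ Cf * (1+‖x‖)^(2-n) :=
            mul_le_mul_of_nonneg_right hM1 (Real.rpow_pos_of_pos hx1 _).le
    · have h22 : (2*‖x‖)^(1-n) ≤ (1+‖x‖)^(1-n) :=
        Real.rpow_le_rpow_of_nonpos hx1 h21 (by linarith)
      have h23 : (2*‖x‖)^(1-n) = 2^(1-n) * ‖x‖^(1-n) :=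
        Real.mul_rpow (by norm_num) (norm_nonneg x)
      have key : ‖x‖^(1-n) ≤ 2^(n-1) * (1+‖x‖)^(1-n) := by
        have := h23 ▸ h22
        calc ‖x‖^(1-n) = 2^(n-1) * (2^(1-n) * ‖x‖^(1-n)) := by
              rw [← mul_assoc, h24', one_mul]
          _ ≤ 2^(n-1) * (1+‖x‖)^(1-n) := by
              apply mul_le_mul_of_nonneg_left this
              positivity
      have hgsum : ‖fderiv ℝ U x‖ + ‖fderiv ℝ V x‖ = -(w1 ‖x‖) := by
        rw [radial_norm_fderiv hdU hUφ hxne0, radial_norm_fderiv hdV hVφ hxne0,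
          abs_of_nonpos (hw'U ‖x‖ hr0), abs_of_nonpos (hw'V ‖x‖ hr0)]
        simp only [hw1]
        ring
      calc ‖fderiv ℝ U x‖ + ‖fderiv ℝ V x‖ = -(w1 ‖x‖) := hgsum
        _ ≤ C₀ * ‖x‖^(1-n) := hb2
        _ ≤ C₀ * (2^(n-1) * (1+‖x‖)^(1-n)) := mul_le_mul_of_nonneg_left key hC₀pos.le
        _ = C₀ * 2^(n-1) * (1+‖x‖)^(1-n) := by ring
        _ ≤ Cf * (1+‖x‖)^(1-n) :=
            mul_le_mul_of_nonneg_right hM2 (Real.rpow_pos_of_pos hx1 _).le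
end

section
/- Let N ≥ 5, ρ > 0, and let ψ : ℝᴺ → ℝ be continuously differentiable with 0 ≤ ψ ≤ 1, ψ ≡ 1 on B(0, ρ) and ψ ≡ 0 outside B(0, 2ρ). Let U : ℝᴺ → ℝ be continuously differentiable with 0 < U(x) ≤ C₀(1 + |x|)^{2-N} and |∇U(x)| ≤ C₀(1 + |x|)^{1-N} for some C₀ > 0, and with ∫_{ℝᴺ}|∇U|² dx < ∞. For ε > 0 set U_ε(x) = ε^{-(N-2)/2} U(x/ε) and u_ε = ψ U_ε. Then there exist c, C > 0 and ε₀ > 0 such that for all 0 < ε < ε₀: (i) ∫_{ℝᴺ} |∇u_ε|² dx ≤ ∫_{ℝᴺ} |∇U|² dx + C ε^{N-2}; (ii) ∫_{ℝᴺ} u_ε^{2*} dx ≥ ∫_{ℝᴺ} U^{2*} dx − C ε^{N}; (iii) ∫_{ℝᴺ} u_ε² dx ≥ c ε² − C ε^{N-2}, where 2* = 2N/(N-2). -/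
open Real MeasureTheory Metric Pointwise
set_option maxHeartbeats 1000000

variable {N : ℕ}

lemma aux_scale (f : EuclideanSpace ℝ (Fin N) → ℝ) {ε : ℝ} (hε : 0 < ε) :
    ∫ x, f (ε⁻¹ • x) = ε ^ N * ∫ x, f x := by
  rw [Measure.integral_comp_inv_smul_of_nonneg volume f hε.le,
    finrank_euclideanSpace_fin, smul_eq_mul]

lemma aux_smul_ball {ε r : ℝ} (hε : 0 < ε) :
    ε⁻¹ • Metric.ball (0 : EuclideanSpace ℝ (Fin N)) r = Metric.ball 0 (r / ε) := by
  rw [smul_ball (inv_ne_zero hε.ne') (0 : EuclideanSpace ℝ (Fin N)) r, smul_zero]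
  rw [norm_inv, Real.norm_eq_abs, abs_of_pos hε]
  ring_nf

lemma aux_scale_set (f : EuclideanSpace ℝ (Fin N) → ℝ) {ε r : ℝ} (hε : 0 < ε) :
    ∫ x in Metric.ball 0 r, f (ε⁻¹ • x) = ε ^ N * ∫ x in Metric.ball 0 (r / ε), f x := by
  rw [Measure.setIntegral_comp_smul_of_pos volume f _ (inv_pos.2 hε),
    finrank_euclideanSpace_fin, aux_smul_ball hε, smul_eq_mul, inv_pow, inv_inv]

lemma aux_smul_compl_ball {R : ℝ} (hR : 0 < R) :
    R • (Metric.ball (0 : EuclideanSpace ℝ (Fin N)) 1)ᶜ = (Metric.ball 0 R)ᶜ := by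
  ext y
  simp only [Set.mem_smul_set_iff_inv_smul_mem₀ hR.ne', Set.mem_compl_iff, Metric.mem_ball,
    dist_zero_right, norm_smul, norm_inv, Real.norm_eq_abs, abs_of_pos hR, not_lt]
  rw [le_inv_mul_iff₀ hR, mul_one]

lemma aux_scale_compl (f : EuclideanSpace ℝ (Fin N) → ℝ) {R : ℝ} (hR : 0 < R) :
    ∫ x in (Metric.ball (0 : EuclideanSpace ℝ (Fin N)) 1)ᶜ, f (R • x)
      = (R ^ N)⁻¹ * ∫ x in (Metric.ball 0 R)ᶜ, f x := by
  rw [Measure.setIntegral_comp_smul_of_pos volume f _ hR, finrank_euclideanSpace_fin,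
    aux_smul_compl_ball hR, smul_eq_mul]

lemma aux_tail_integrable (hN : 0 < N) {r : ℝ} (hr : 0 < r) :
    IntegrableOn (fun x : EuclideanSpace ℝ (Fin N) => ‖x‖ ^ (-(2 * (N : ℝ))))
      (Metric.ball 0 r)ᶜ := by
  have hfin : (Module.finrank ℝ (EuclideanSpace ℝ (Fin N)) : ℝ) < 2 * N := by
    rw [finrank_euclideanSpace_fin]
    have : (0:ℝ) < N := by exact_mod_cast hN
    linarith
  have hint : Integrable (fun x : EuclideanSpace ℝ (Fin N) =>
      (1 + r⁻¹) ^ (2 * (N : ℝ)) * (1 + ‖x‖) ^ (-(2 * (N : ℝ)))) := by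
    exact (integrable_one_add_norm (E := EuclideanSpace ℝ (Fin N)) (μ := volume)
      (r := 2 * N) hfin).const_mul _
  refine Integrable.mono hint.integrableOn ?_ ?_
  · exact (Measurable.aestronglyMeasurable (by fun_prop)).restrict
  · rw [ae_restrict_iff' measurableSet_ball.compl]
    refine Filter.Eventually.of_forall fun x hx => ?_
    have hxr : r ≤ ‖x‖ := by
      simpa [Metric.mem_ball, not_lt] using hx
    have hx0 : (0:ℝ) < ‖x‖ := lt_of_lt_of_le hr hxr
    have h1 : 1 + ‖x‖ ≤ (1 + r⁻¹) * ‖x‖ := by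
      rw [add_mul, one_mul, inv_mul_eq_div]
      have := (one_le_div hr).2 hxr
      linarith
    have h2 : ((1 + r⁻¹) * ‖x‖) ^ (-(2 * (N:ℝ))) ≤ (1 + ‖x‖) ^ (-(2 * (N:ℝ))) :=
      Real.rpow_le_rpow_of_nonpos (by positivity) h1 (neg_nonpos.mpr (by positivity))
    rw [Real.mul_rpow (by positivity) hx0.le] at h2
    have h3 : ‖x‖ ^ (-(2 * (N:ℝ))) ≤ (1 + r⁻¹) ^ (2 * (N:ℝ)) * (1 + ‖x‖) ^ (-(2 * (N:ℝ))) := by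
      have hk : (0:ℝ) < (1 + r⁻¹) ^ (2 * (N:ℝ)) := by positivity
      have hid : ((1 + r⁻¹) : ℝ) ^ (2 * (N:ℝ)) * (1 + r⁻¹) ^ (-(2 * (N:ℝ))) = 1 := by
        rw [← Real.rpow_add (by positivity)]; simp
      calc ‖x‖ ^ (-(2 * (N:ℝ)))
          = (1 + r⁻¹) ^ (2 * (N:ℝ)) * ((1 + r⁻¹) ^ (-(2 * (N:ℝ))) * ‖x‖ ^ (-(2 * (N:ℝ)))) := by
            rw [← mul_assoc, hid, one_mul]
        _ ≤ _ := mul_le_mul_of_nonneg_left h2 hk.le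
    calc ‖(fun x : EuclideanSpace ℝ (Fin N) => ‖x‖ ^ (-(2 * (N : ℝ)))) x‖
        = ‖x‖ ^ (-(2 * (N:ℝ))) := by
          rw [Real.norm_eq_abs, abs_of_nonneg (Real.rpow_nonneg (norm_nonneg x) _)]
      _ ≤ (1 + r⁻¹) ^ (2 * (N:ℝ)) * (1 + ‖x‖) ^ (-(2 * (N:ℝ))) := h3
      _ ≤ ‖(1 + r⁻¹) ^ (2 * (N:ℝ)) * (1 + ‖x‖) ^ (-(2 * (N:ℝ)))‖ := le_abs_self _


lemma aux_tail_value (hN : 0 < N) {R : ℝ} (hR : 0 < R) :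
    ∫ x in (Metric.ball (0 : EuclideanSpace ℝ (Fin N)) R)ᶜ, ‖x‖ ^ (-(2 * (N : ℝ)))
      = R ^ (-(N : ℝ)) *
        ∫ x in (Metric.ball (0 : EuclideanSpace ℝ (Fin N)) 1)ᶜ, ‖x‖ ^ (-(2 * (N : ℝ))) := by
  have h1 := aux_scale_compl (N := N) (fun x => ‖x‖ ^ (-(2 * (N : ℝ)))) hR
  have h2 : ∫ x in (Metric.ball (0 : EuclideanSpace ℝ (Fin N)) 1)ᶜ, ‖R • x‖ ^ (-(2 * (N : ℝ)))
      = R ^ (-(2 * (N:ℝ))) *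
        ∫ x in (Metric.ball (0 : EuclideanSpace ℝ (Fin N)) 1)ᶜ, ‖x‖ ^ (-(2 * (N : ℝ))) := by
    rw [← integral_const_mul]
    refine setIntegral_congr_fun measurableSet_ball.compl fun x hx => ?_
    rw [norm_smul, Real.norm_eq_abs, abs_of_pos hR,
      Real.mul_rpow hR.le (norm_nonneg x)]
  rw [h2] at h1
  have hB : (∫ x in (Metric.ball (0 : EuclideanSpace ℝ (Fin N)) R)ᶜ, ‖x‖ ^ (-(2 * (N : ℝ))))
      = (R:ℝ) ^ (N:ℝ) * (R ^ (-(2 * (N:ℝ))) *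
        ∫ x in (Metric.ball (0 : EuclideanSpace ℝ (Fin N)) 1)ᶜ, ‖x‖ ^ (-(2 * (N : ℝ)))) := by
    rw [h1, Real.rpow_natCast, ← mul_assoc, mul_inv_cancel₀ (by positivity), one_mul]
  rw [hB, ← mul_assoc, ← Real.rpow_add hR, show (N:ℝ) + -(2*(N:ℝ)) = -(N:ℝ) by ring]

theorem stmt_16 (N : ℕ) (hN : 5 ≤ N) (ρ : ℝ) (hρ : 0 < ρ)
    (ψ : EuclideanSpace ℝ (Fin N) → ℝ) (hψ : ContDiff ℝ 1 ψ)
    (hψ0 : ∀ x, 0 ≤ ψ x) (hψ1 : ∀ x, ψ x ≤ 1)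
    (hψin : ∀ x ∈ Metric.closedBall (0 : EuclideanSpace ℝ (Fin N)) ρ, ψ x = 1)
    (hψout : ∀ x ∉ Metric.closedBall (0 : EuclideanSpace ℝ (Fin N)) (2 * ρ), ψ x = 0)
    (C₀ : ℝ) (hC₀ : 0 < C₀)
    (U : EuclideanSpace ℝ (Fin N) → ℝ) (hU : ContDiff ℝ 1 U)
    (hUpos : ∀ x, 0 < U x)
    (hUbd : ∀ x, U x ≤ C₀ * (1 + ‖x‖) ^ (2 - (N : ℝ)))
    (hUgrad : ∀ x, ‖fderiv ℝ U x‖ ≤ C₀ * (1 + ‖x‖) ^ (1 - (N : ℝ)))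
    (hUint : Integrable (fun x => ‖fderiv ℝ U x‖ ^ 2)) :
    ∃ c > (0 : ℝ), ∃ C > (0 : ℝ), ∃ ε₀ > (0 : ℝ), ∀ ε : ℝ, 0 < ε → ε < ε₀ →
      (∫ x, ‖fderiv ℝ
          (fun y => ψ y * (ε ^ (-(((N : ℝ) - 2) / 2)) * U (ε⁻¹ • y))) x‖ ^ 2)
        ≤ (∫ x, ‖fderiv ℝ U x‖ ^ 2) + C * ε ^ ((N : ℝ) - 2) ∧
      (∫ x, U x ^ (2 * (N : ℝ) / ((N : ℝ) - 2))) - C * ε ^ (N : ℝ)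
        ≤ (∫ x, (ψ x * (ε ^ (-(((N : ℝ) - 2) / 2)) * U (ε⁻¹ • x)))
            ^ (2 * (N : ℝ) / ((N : ℝ) - 2))) ∧
      c * ε ^ 2 - C * ε ^ ((N : ℝ) - 2)
        ≤ ∫ x, (ψ x * (ε ^ (-(((N : ℝ) - 2) / 2)) * U (ε⁻¹ • x))) ^ 2 := by
  have hN0 : 0 < N := by omega
  have hNR : (5 : ℝ) ≤ (N : ℝ) := by exact_mod_cast hN
  have hN2 : (0 : ℝ) < (N : ℝ) - 2 := by linarith
  set p : ℝ := 2 * (N : ℝ) / ((N : ℝ) - 2) with hp_def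
  have hp : 0 < p := by positivity
  have hUc : Continuous U := hU.continuous
  have hUd : Differentiable ℝ U := hU.differentiable one_ne_zero
  have hψc : Continuous ψ := hψ.continuous
  have hψd : Differentiable ℝ ψ := hψ.differentiable one_ne_zero
  -- derivative of ψ vanishes inside the small ball and outside the big ball
  have hfψ0in : ∀ x : EuclideanSpace ℝ (Fin N), ‖x‖ < ρ → fderiv ℝ ψ x = 0 := by
    intro x hx
    have hev : ψ =ᶠ[nhds x] fun _ => (1 : ℝ) := by
      filter_upwards [Metric.ball_mem_nhds x (by linarith : (0:ℝ) < ρ - ‖x‖)] with y hy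
      refine hψin y ?_
      rw [Metric.mem_closedBall, dist_zero_right]
      rw [Metric.mem_ball] at hy
      have := norm_le_of_mem_closedBall (Metric.ball_subset_closedBall hy)
      calc ‖y‖ ≤ ‖x‖ + dist y x := by
            rw [dist_eq_norm]
            simpa [add_comm] using norm_le_insert' y x
        _ ≤ ρ := by linarith
    rw [hev.fderiv_eq, fderiv_fun_const]
    rfl
  have hfψ0out : ∀ x : EuclideanSpace ℝ (Fin N), 2 * ρ < ‖x‖ → fderiv ℝ ψ x = 0 := by
    intro x hx
    have hev : ψ =ᶠ[nhds x] fun _ => (0 : ℝ) := by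
      filter_upwards [Metric.ball_mem_nhds x (by linarith : (0:ℝ) < ‖x‖ - 2 * ρ)] with y hy
      refine hψout y ?_
      rw [Metric.mem_closedBall, dist_zero_right, not_le]
      rw [Metric.mem_ball, dist_eq_norm] at hy
      have : ‖x‖ - ‖y‖ ≤ ‖y - x‖ := by
        simpa [norm_sub_rev] using norm_sub_norm_le x y
      linarith
    rw [hev.fderiv_eq, fderiv_fun_const]
    rfl
  -- bound on the derivative of ψ
  obtain ⟨M₀, hM₀⟩ : ∃ M₀, ∀ x, ‖fderiv ℝ ψ x‖ ≤ M₀ := by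
    refine HasCompactSupport.exists_bound_of_continuous ?_ (hψ.continuous_fderiv one_ne_zero)
    refine HasCompactSupport.intro (isCompact_closedBall (0 : EuclideanSpace ℝ (Fin N)) (2*ρ))
      fun x hx => ?_
    refine hfψ0out x ?_
    rw [Metric.mem_closedBall, dist_zero_right, not_le] at hx
    exact hx
  set M : ℝ := max M₀ 0 with hM_def
  have hM0 : 0 ≤ M := le_max_right _ _
  have hM : ∀ x, ‖fderiv ℝ ψ x‖ ≤ M := fun x => (hM₀ x).trans (le_max_left _ _)
  -- the constants
  set c : ℝ := ∫ x in Metric.ball (0 : EuclideanSpace ℝ (Fin N)) ρ, (U x) ^ 2 with hc_def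
  set I₁ : ℝ := ∫ x in (Metric.ball (0 : EuclideanSpace ℝ (Fin N)) 1)ᶜ, ‖x‖ ^ (-(2 * (N : ℝ)))
    with hI₁_def
  have hI₁0 : 0 ≤ I₁ := integral_nonneg fun x => Real.rpow_nonneg (norm_nonneg _) _
  set K : ℝ := 2 * (C₀ * ρ ^ ((1:ℝ) - (N:ℝ))) * (C₀ * ρ ^ ((2:ℝ) - (N:ℝ)) * M)
      + (C₀ * ρ ^ ((2:ℝ) - (N:ℝ)) * M) ^ 2 with hK_def
  have hK0 : 0 ≤ K := by positivity
  set Ci : ℝ := K * (volume (Metric.closedBall (0 : EuclideanSpace ℝ (Fin N)) (2*ρ))).toReal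
    with hCi_def
  have hCi0 : 0 ≤ Ci := mul_nonneg hK0 ENNReal.toReal_nonneg
  set Cii : ℝ := C₀ ^ p * (ρ ^ (-(N:ℝ)) * I₁) with hCii_def
  have hCii0 : 0 ≤ Cii := by positivity
  set C : ℝ := max Ci Cii + 1 with hC_def
  have hC : 0 < C := by positivity
  have hCiC : Ci ≤ C := by
    have := le_max_left Ci Cii; linarith
  have hCiiC : Cii ≤ C := by
    have := le_max_right Ci Cii; linarith
  have hc_pos : 0 < c := by
    rw [hc_def]
    rw [setIntegral_pos_iff_support_of_nonneg_ae
      (Filter.Eventually.of_forall fun x => sq_nonneg _)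
      (((hUc.pow 2).continuousOn).integrableOn_compact
        (isCompact_closedBall _ _) |>.mono_set Metric.ball_subset_closedBall)]
    have hsupp : (Function.support fun x => U x ^ 2) = Set.univ := by
      ext x
      simp [Function.mem_support, pow_eq_zero_iff, (hUpos x).ne']
    rw [hsupp, Set.univ_inter]
    exact Metric.measure_ball_pos volume _ hρ
  refine ⟨c, hc_pos, C, hC, 1, one_pos, fun ε hε hε1 => ?_⟩
  -- notation for the scaled functions
  set a : ℝ := ε ^ (-(((N : ℝ) - 2) / 2)) with ha_def
  have ha : 0 < a := Real.rpow_pos_of_pos hε _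
  have hv_cont : Continuous fun y : EuclideanSpace ℝ (Fin N) => a * U (ε⁻¹ • y) :=
    continuous_const.mul (hUc.comp (continuous_const_smul ε⁻¹))
  have hu_cont : Continuous fun y : EuclideanSpace ℝ (Fin N) => ψ y * (a * U (ε⁻¹ • y)) :=
    hψc.mul hv_cont
  have hψ1on : ∀ x ∈ Metric.ball (0 : EuclideanSpace ℝ (Fin N)) ρ, ψ x = 1 := fun x hx =>
    hψin x (Metric.ball_subset_closedBall hx)
  have hρε : ρ ≤ ρ / ε := by
    rw [le_div_iff₀ hε]
    nlinarith
  have hεN2 : 0 < ε ^ ((N:ℝ) - 2) := Real.rpow_pos_of_pos hε _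
  have hUsq_int : IntegrableOn (fun x : EuclideanSpace ℝ (Fin N) => U x ^ 2)
      (Metric.ball 0 (ρ/ε)) volume :=
    (((hUc.pow 2).continuousOn).integrableOn_compact
      (isCompact_closedBall _ _)).mono_set Metric.ball_subset_closedBall
  have hpart3 : c * ε ^ 2 - C * ε ^ ((N : ℝ) - 2)
      ≤ ∫ x, (ψ x * (a * U (ε⁻¹ • x))) ^ 2 := by
    have hint2 : Integrable (fun x => (ψ x * (a * U (ε⁻¹ • x))) ^ 2) := by
      refine (hu_cont.pow 2).integrable_of_hasCompactSupport ?_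
      refine HasCompactSupport.intro
        (isCompact_closedBall (0 : EuclideanSpace ℝ (Fin N)) (2*ρ)) fun x hx => ?_
      simp [hψout x hx]
    have h31 : ∫ x in Metric.ball (0 : EuclideanSpace ℝ (Fin N)) ρ, (ψ x * (a * U (ε⁻¹ • x))) ^ 2
        ≤ ∫ x, (ψ x * (a * U (ε⁻¹ • x))) ^ 2 :=
      setIntegral_le_integral hint2 (Filter.Eventually.of_forall fun x => sq_nonneg _)
    have h32 : ∫ x in Metric.ball (0 : EuclideanSpace ℝ (Fin N)) ρ, (ψ x * (a * U (ε⁻¹ • x))) ^ 2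
        = a ^ 2 * ∫ x in Metric.ball (0 : EuclideanSpace ℝ (Fin N)) ρ,
            (fun y => (U y) ^ 2) (ε⁻¹ • x) := by
      rw [← integral_const_mul]
      refine setIntegral_congr_fun measurableSet_ball fun x hx => ?_
      rw [hψ1on x hx]
      ring
    have h33 := aux_scale_set (N := N) (fun y => (U y) ^ 2) hε (r := ρ)
    have h34 : c ≤ ∫ x in Metric.ball (0 : EuclideanSpace ℝ (Fin N)) (ρ/ε), (U x) ^ 2 := by
      rw [hc_def]
      refine setIntegral_mono_set hUsq_int
        (Filter.Eventually.of_forall fun x => sq_nonneg _)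
        (HasSubset.Subset.eventuallyLE (Metric.ball_subset_ball (by linarith)))
    have hpow2 : a ^ 2 * (ε : ℝ) ^ (N : ℕ) = ε ^ 2 := by
      rw [ha_def, ← Real.rpow_natCast ε N, ← Real.rpow_natCast (ε ^ (-(((N : ℝ) - 2) / 2))) 2,
        ← Real.rpow_mul hε.le, ← Real.rpow_add hε, ← Real.rpow_natCast ε 2]
      congr 1
      push_cast
      ring
    have hCe : 0 ≤ C * ε ^ ((N:ℝ) - 2) := le_of_lt (by positivity)
    have : c * ε ^ 2 ≤ ∫ x, (ψ x * (a * U (ε⁻¹ • x))) ^ 2 := by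
      calc c * ε ^ 2 = a ^ 2 * ((ε:ℝ) ^ (N:ℕ) * c) := by rw [← mul_assoc, hpow2]; ring
        _ ≤ a ^ 2 * ((ε:ℝ) ^ (N:ℕ) *
            ∫ x in Metric.ball (0 : EuclideanSpace ℝ (Fin N)) (ρ/ε), (U x) ^ 2) := by
            have h0 : (0:ℝ) ≤ (ε:ℝ) ^ (N:ℕ) := by positivity
            exact mul_le_mul_of_nonneg_left
              (mul_le_mul_of_nonneg_left h34 h0) (sq_nonneg a)
        _ = ∫ x in Metric.ball (0 : EuclideanSpace ℝ (Fin N)) ρ, (ψ x * (a * U (ε⁻¹ • x))) ^ 2 := by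
            rw [h32, h33]
        _ ≤ _ := h31
    exact (sub_le_self (c * ε ^ 2) hCe).trans this
  have hfin : (Module.finrank ℝ (EuclideanSpace ℝ (Fin N)) : ℝ) < 2 * (N:ℝ) := by
    rw [finrank_euclideanSpace_fin]
    linarith
  have hexp2 : (2 - (N:ℝ)) * p = -(2 * (N:ℝ)) := by
    rw [hp_def]
    field_simp
    ring
  have hUpt : ∀ x : EuclideanSpace ℝ (Fin N),
      U x ^ p ≤ C₀ ^ p * (1 + ‖x‖) ^ (-(2 * (N:ℝ))) := by
    intro x
    calc U x ^ p ≤ (C₀ * (1 + ‖x‖) ^ (2 - (N:ℝ))) ^ p :=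
          Real.rpow_le_rpow (hUpos x).le (hUbd x) hp.le
      _ = C₀ ^ p * ((1 + ‖x‖) ^ (2 - (N:ℝ))) ^ p :=
          Real.mul_rpow hC₀.le (Real.rpow_nonneg (by positivity) _)
      _ = C₀ ^ p * (1 + ‖x‖) ^ (-(2 * (N:ℝ))) := by
          rw [← Real.rpow_mul (by positivity : (0:ℝ) ≤ 1 + ‖x‖), hexp2]
  have hUp_cont : Continuous fun x : EuclideanSpace ℝ (Fin N) => U x ^ p :=
    (Real.continuous_rpow_const hp.le).comp hUc
  have hUp_int : Integrable (fun x : EuclideanSpace ℝ (Fin N) => U x ^ p) := by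
    refine Integrable.mono
      ((integrable_one_add_norm (E := EuclideanSpace ℝ (Fin N)) (μ := volume)
        (r := 2 * (N:ℝ)) hfin).const_mul (C₀ ^ p)) hUp_cont.aestronglyMeasurable ?_
    refine Filter.Eventually.of_forall fun x => ?_
    rw [Real.norm_eq_abs, Real.norm_eq_abs,
      abs_of_nonneg (Real.rpow_nonneg (hUpos x).le _), abs_of_nonneg (by positivity)]
    exact hUpt x
  have hεNr : ε ^ (N:ℝ) = (ε:ℝ) ^ (N:ℕ) := Real.rpow_natCast ε N
  have hpart2 : (∫ x, U x ^ p) - C * ε ^ (N:ℝ)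
      ≤ ∫ x, (ψ x * (a * U (ε⁻¹ • x))) ^ p := by
    have hRpos : 0 < ρ / ε := by positivity
    have htail1 : ∫ x in (Metric.ball (0 : EuclideanSpace ℝ (Fin N)) (ρ/ε))ᶜ, U x ^ p
        ≤ C₀ ^ p * ∫ x in (Metric.ball (0 : EuclideanSpace ℝ (Fin N)) (ρ/ε))ᶜ,
            ‖x‖ ^ (-(2*(N:ℝ))) := by
      rw [← integral_const_mul]
      refine setIntegral_mono_on hUp_int.integrableOn
        ((aux_tail_integrable hN0 hRpos).const_mul (C₀ ^ p))
        measurableSet_ball.compl fun x hx => ?_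
      have hxnorm : ρ / ε ≤ ‖x‖ := by
        simpa [Metric.mem_ball, not_lt] using hx
      have hx0 : 0 < ‖x‖ := lt_of_lt_of_le hRpos hxnorm
      refine (hUpt x).trans (mul_le_mul_of_nonneg_left ?_ (by positivity))
      exact Real.rpow_le_rpow_of_nonpos hx0 (by linarith) (neg_nonpos.mpr (by positivity))
    have htail2 := aux_tail_value (N := N) hN0 hRpos
    have hdivpow : (ρ/ε) ^ (-(N:ℝ)) = ρ ^ (-(N:ℝ)) * ε ^ (N:ℝ) := by
      rw [Real.div_rpow hρ.le hε.le, div_eq_mul_inv, ← Real.rpow_neg hε.le, neg_neg]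
    have htail : ∫ x in (Metric.ball (0 : EuclideanSpace ℝ (Fin N)) (ρ/ε))ᶜ, U x ^ p
        ≤ C * ε ^ (N:ℝ) := by
      calc ∫ x in (Metric.ball (0 : EuclideanSpace ℝ (Fin N)) (ρ/ε))ᶜ, U x ^ p
          ≤ C₀ ^ p * ((ρ/ε) ^ (-(N:ℝ)) * I₁) := by rw [← htail2]; exact htail1
        _ = Cii * ε ^ (N:ℝ) := by rw [hdivpow, hCii_def]; ring
        _ ≤ C * ε ^ (N:ℝ) := by
            have h0 : (0:ℝ) ≤ ε ^ (N:ℝ) := Real.rpow_nonneg hε.le _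
            exact mul_le_mul_of_nonneg_right hCiiC h0
    have hap : a ^ p * (ε:ℝ) ^ (N:ℕ) = 1 := by
      have he : (-(((N:ℝ)-2)/2)) * p = -(N:ℝ) := by
        rw [hp_def]
        field_simp
      rw [ha_def, ← Real.rpow_natCast ε N, ← Real.rpow_mul hε.le, he, ← Real.rpow_add hε]
      simp
    have hint_p : Integrable (fun x => (ψ x * (a * U (ε⁻¹ • x))) ^ p) := by
      refine Continuous.integrable_of_hasCompactSupport
        ((Real.continuous_rpow_const hp.le).comp hu_cont) ?_
      refine HasCompactSupport.intro
        (isCompact_closedBall (0 : EuclideanSpace ℝ (Fin N)) (2*ρ)) fun x hx => ?_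
      simp only [Function.comp, hψout x hx, zero_mul]
      exact Real.zero_rpow hp.ne'
    have h21 : ∫ x in Metric.ball (0 : EuclideanSpace ℝ (Fin N)) ρ, (ψ x * (a * U (ε⁻¹ • x))) ^ p
        ≤ ∫ x, (ψ x * (a * U (ε⁻¹ • x))) ^ p :=
      setIntegral_le_integral hint_p (Filter.Eventually.of_forall fun x =>
        Real.rpow_nonneg (mul_nonneg (hψ0 x) (mul_nonneg ha.le (hUpos _).le)) _)
    have h22 : ∫ x in Metric.ball (0 : EuclideanSpace ℝ (Fin N)) ρ, (ψ x * (a * U (ε⁻¹ • x))) ^ p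
        = a ^ p * ∫ x in Metric.ball (0 : EuclideanSpace ℝ (Fin N)) ρ,
            (fun y => U y ^ p) (ε⁻¹ • x) := by
      rw [← integral_const_mul]
      refine setIntegral_congr_fun measurableSet_ball fun x hx => ?_
      rw [hψ1on x hx, one_mul, Real.mul_rpow ha.le (hUpos _).le]
    have h23 := aux_scale_set (N := N) (fun y => U y ^ p) hε (r := ρ)
    have h24 : (∫ x in Metric.ball (0 : EuclideanSpace ℝ (Fin N)) (ρ/ε), U x ^ p)
        + ∫ x in (Metric.ball (0 : EuclideanSpace ℝ (Fin N)) (ρ/ε))ᶜ, U x ^ p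
        = ∫ x, U x ^ p := integral_add_compl measurableSet_ball hUp_int
    have hmain : ∫ x in Metric.ball (0 : EuclideanSpace ℝ (Fin N)) ρ, (ψ x * (a * U (ε⁻¹ • x))) ^ p
        = ∫ x in Metric.ball (0 : EuclideanSpace ℝ (Fin N)) (ρ/ε), U x ^ p := by
      rw [h22, h23, ← mul_assoc, hap, one_mul]
    have : (∫ x, U x ^ p) - C * ε ^ (N:ℝ)
        ≤ ∫ x in Metric.ball (0 : EuclideanSpace ℝ (Fin N)) ρ, (ψ x * (a * U (ε⁻¹ • x))) ^ p := by
      rw [hmain]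
      linarith
    exact this.trans h21
  -- Part (i)
  have hL : ∀ x : EuclideanSpace ℝ (Fin N), HasFDerivAt (fun y : EuclideanSpace ℝ (Fin N) => ε⁻¹ • y)
      (ε⁻¹ • ContinuousLinearMap.id ℝ (EuclideanSpace ℝ (Fin N))) x := fun x => by
    exact (ε⁻¹ • ContinuousLinearMap.id ℝ (EuclideanSpace ℝ (Fin N))).hasFDerivAt (x := x)
  have h_fv : ∀ x : EuclideanSpace ℝ (Fin N), HasFDerivAt
      (fun y : EuclideanSpace ℝ (Fin N) => a * U (ε⁻¹ • y))
      ((a * ε⁻¹) • fderiv ℝ U (ε⁻¹ • x)) x := by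
    intro x
    have hcomp := ((hUd (ε⁻¹ • x)).hasFDerivAt.comp x (hL x))
    have := hcomp.const_mul a
    refine this.congr_fderiv ?_
    refine ContinuousLinearMap.ext fun y => ?_
    simp [ContinuousLinearMap.smul_apply, ContinuousLinearMap.comp_apply, _root_.map_smul, smul_smul,
      Function.comp]
  have hv_diff : ∀ x, DifferentiableAt ℝ
      (fun y : EuclideanSpace ℝ (Fin N) => a * U (ε⁻¹ • y)) x := fun x => (h_fv x).differentiableAt
  have hfd_v : ∀ x, fderiv ℝ (fun y : EuclideanSpace ℝ (Fin N) => a * U (ε⁻¹ • y)) x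
      = (a * ε⁻¹) • fderiv ℝ U (ε⁻¹ • x) := fun x => (h_fv x).fderiv
  have hnorm_v : ∀ x, ‖fderiv ℝ (fun y : EuclideanSpace ℝ (Fin N) => a * U (ε⁻¹ • y)) x‖
      = (a * ε⁻¹) * ‖fderiv ℝ U (ε⁻¹ • x)‖ := by
    intro x
    rw [hfd_v x, norm_smul, Real.norm_eq_abs, abs_of_pos (by positivity)]
  have hnorm_u : ∀ x, ‖fderiv ℝ (fun y => ψ y * (a * U (ε⁻¹ • y))) x‖
      ≤ ψ x * ‖fderiv ℝ (fun y : EuclideanSpace ℝ (Fin N) => a * U (ε⁻¹ • y)) x‖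
        + (a * U (ε⁻¹ • x)) * ‖fderiv ℝ ψ x‖ := by
    intro x
    rw [fderiv_fun_mul (hψd x) (hv_diff x)]
    refine (norm_add_le _ _).trans ?_
    rw [norm_smul, norm_smul, Real.norm_eq_abs, Real.norm_eq_abs,
      abs_of_nonneg (hψ0 x), abs_of_pos (mul_pos ha (hUpos _))]
  -- bounds on the annulus
  have hnorm_scale : ∀ x : EuclideanSpace ℝ (Fin N), ‖ε⁻¹ • x‖ = ‖x‖ / ε := by
    intro x
    rw [norm_smul, norm_inv, Real.norm_eq_abs, abs_of_pos hε]
    ring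
  have hrpow_div : ∀ q : ℝ, q ≤ 0 → ∀ x : EuclideanSpace ℝ (Fin N), ρ ≤ ‖x‖ →
      (1 + ‖ε⁻¹ • x‖) ^ q ≤ (ρ / ε) ^ q := by
    intro q hq x hx
    have hx0 : 0 < ‖x‖ := lt_of_lt_of_le hρ hx
    have h1 : (ρ / ε) ≤ ‖x‖ / ε := by gcongr
    have h2 : 0 < ‖ε⁻¹ • x‖ := by
      rw [hnorm_scale x]
      positivity
    calc (1 + ‖ε⁻¹ • x‖) ^ q ≤ ‖ε⁻¹ • x‖ ^ q :=
          Real.rpow_le_rpow_of_nonpos h2 (by linarith) hq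
      _ ≤ (ρ / ε) ^ q := by
          refine Real.rpow_le_rpow_of_nonpos (by positivity) ?_ hq
          rw [hnorm_scale x]
          exact h1
  have hae : a * ε ^ ((N:ℝ)-2) = ε ^ (((N:ℝ)-2)/2) := by
    rw [ha_def, ← Real.rpow_add hε]
    congr 1
    ring
  have hεinv : ε⁻¹ = ε ^ (-1:ℝ) := by
    rw [Real.rpow_neg_one]
  have he2 : (ε ^ (((N:ℝ)-2)/2)) ^ 2 = ε ^ ((N:ℝ)-2) := by
    rw [← Real.rpow_natCast (ε ^ (((N:ℝ)-2)/2)) 2, ← Real.rpow_mul hε.le]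
    congr 1
    push_cast
    ring
  have hvbd : ∀ x : EuclideanSpace ℝ (Fin N), ρ ≤ ‖x‖ →
      a * U (ε⁻¹ • x) ≤ C₀ * ρ ^ ((2:ℝ)-(N:ℝ)) * ε ^ (((N:ℝ)-2)/2) := by
    intro x hx
    have hb : U (ε⁻¹ • x) ≤ C₀ * (ρ/ε) ^ ((2:ℝ)-(N:ℝ)) := by
      refine (hUbd (ε⁻¹ • x)).trans ?_
      refine mul_le_mul_of_nonneg_left ?_ hC₀.le
      have := hrpow_div ((2:ℝ)-(N:ℝ)) (by linarith) x hx
      simpa using this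
    have hdd : (ρ/ε) ^ ((2:ℝ)-(N:ℝ)) = ρ ^ ((2:ℝ)-(N:ℝ)) * ε ^ ((N:ℝ)-2) := by
      rw [Real.div_rpow hρ.le hε.le, div_eq_mul_inv, ← Real.rpow_neg hε.le,
        show -((2:ℝ)-(N:ℝ)) = (N:ℝ)-2 by ring]
    calc a * U (ε⁻¹ • x) ≤ a * (C₀ * (ρ/ε) ^ ((2:ℝ)-(N:ℝ))) :=
          mul_le_mul_of_nonneg_left hb ha.le
      _ = C₀ * ρ ^ ((2:ℝ)-(N:ℝ)) * (a * ε ^ ((N:ℝ)-2)) := by rw [hdd]; ring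
      _ = C₀ * ρ ^ ((2:ℝ)-(N:ℝ)) * ε ^ (((N:ℝ)-2)/2) := by rw [hae]
  have hgvbd : ∀ x : EuclideanSpace ℝ (Fin N), ρ ≤ ‖x‖ →
      ‖fderiv ℝ (fun y : EuclideanSpace ℝ (Fin N) => a * U (ε⁻¹ • y)) x‖
        ≤ C₀ * ρ ^ ((1:ℝ)-(N:ℝ)) * ε ^ (((N:ℝ)-2)/2) := by
    intro x hx
    have hb : ‖fderiv ℝ U (ε⁻¹ • x)‖ ≤ C₀ * (ρ/ε) ^ ((1:ℝ)-(N:ℝ)) := by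
      refine (hUgrad (ε⁻¹ • x)).trans ?_
      refine mul_le_mul_of_nonneg_left ?_ hC₀.le
      have := hrpow_div ((1:ℝ)-(N:ℝ)) (by linarith) x hx
      simpa using this
    have hdd : (ρ/ε) ^ ((1:ℝ)-(N:ℝ)) = ρ ^ ((1:ℝ)-(N:ℝ)) * ε ^ ((N:ℝ)-1) := by
      rw [Real.div_rpow hρ.le hε.le, div_eq_mul_inv, ← Real.rpow_neg hε.le,
        show -((1:ℝ)-(N:ℝ)) = (N:ℝ)-1 by ring]
    have hae2 : a * ε⁻¹ * ε ^ ((N:ℝ)-1) = ε ^ (((N:ℝ)-2)/2) := by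
      rw [ha_def, hεinv, ← Real.rpow_add hε, ← Real.rpow_add hε]
      congr 1
      ring
    calc ‖fderiv ℝ (fun y : EuclideanSpace ℝ (Fin N) => a * U (ε⁻¹ • y)) x‖
        = (a * ε⁻¹) * ‖fderiv ℝ U (ε⁻¹ • x)‖ := hnorm_v x
      _ ≤ (a * ε⁻¹) * (C₀ * ((ρ/ε) ^ ((1:ℝ)-(N:ℝ)))) :=
          mul_le_mul_of_nonneg_left hb (by positivity)
      _ = C₀ * ρ ^ ((1:ℝ)-(N:ℝ)) * (a * ε⁻¹ * ε ^ ((N:ℝ)-1)) := by rw [hdd]; ring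
      _ = C₀ * ρ ^ ((1:ℝ)-(N:ℝ)) * ε ^ (((N:ℝ)-2)/2) := by rw [hae2]
  -- pointwise estimate
  have hpw : ∀ x, ‖fderiv ℝ (fun y => ψ y * (a * U (ε⁻¹ • y))) x‖ ^ 2
      ≤ ‖fderiv ℝ (fun y : EuclideanSpace ℝ (Fin N) => a * U (ε⁻¹ • y)) x‖ ^ 2
        + Set.indicator (Metric.closedBall (0 : EuclideanSpace ℝ (Fin N)) (2*ρ))
            (fun _ => K * ε ^ ((N:ℝ)-2)) x := by
    intro x
    have hind0 : 0 ≤ Set.indicator (Metric.closedBall (0 : EuclideanSpace ℝ (Fin N)) (2*ρ))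
        (fun _ => K * ε ^ ((N:ℝ)-2)) x :=
      Set.indicator_nonneg (fun _ _ => by positivity) x
    by_cases hdψ : fderiv ℝ ψ x = 0
    · have h := hnorm_u x
      rw [hdψ, norm_zero, mul_zero, add_zero] at h
      have h2 : ‖fderiv ℝ (fun y => ψ y * (a * U (ε⁻¹ • y))) x‖
          ≤ ‖fderiv ℝ (fun y : EuclideanSpace ℝ (Fin N) => a * U (ε⁻¹ • y)) x‖ :=
        h.trans (mul_le_of_le_one_left (norm_nonneg _) (hψ1 x))
      have h3 := pow_le_pow_left₀ (norm_nonneg _) h2 2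
      linarith [h3, hind0]
    · have hx1 : ρ ≤ ‖x‖ := by
        by_contra hlt
        exact hdψ (hfψ0in x (not_le.1 hlt))
      have hx2 : ‖x‖ ≤ 2*ρ := by
        by_contra hlt
        exact hdψ (hfψ0out x (not_le.1 hlt))
      have hmem : x ∈ Metric.closedBall (0 : EuclideanSpace ℝ (Fin N)) (2*ρ) := by
        rw [Metric.mem_closedBall, dist_zero_right]
        exact hx2
      rw [Set.indicator_of_mem hmem]
      have hA := hvbd x hx1
      have hB := hgvbd x hx1
      have hn := hnorm_u x
      have hKe : K * ε ^ ((N:ℝ)-2)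
          = 2 * (C₀ * ρ ^ ((1:ℝ)-(N:ℝ)) * ε ^ (((N:ℝ)-2)/2))
              * ((C₀ * ρ ^ ((2:ℝ)-(N:ℝ)) * ε ^ (((N:ℝ)-2)/2)) * M)
            + ((C₀ * ρ ^ ((2:ℝ)-(N:ℝ)) * ε ^ (((N:ℝ)-2)/2)) * M) ^ 2 := by
        rw [hK_def, ← he2]
        ring
      set s := ψ x * ‖fderiv ℝ (fun y : EuclideanSpace ℝ (Fin N) => a * U (ε⁻¹ • y)) x‖ with hs_def
      set t := (a * U (ε⁻¹ • x)) * ‖fderiv ℝ ψ x‖ with ht_def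
      have hs0 : 0 ≤ s := mul_nonneg (hψ0 x) (norm_nonneg _)
      have ht0 : 0 ≤ t := mul_nonneg (mul_pos ha (hUpos _)).le (norm_nonneg _)
      have hsv : s ≤ ‖fderiv ℝ (fun y : EuclideanSpace ℝ (Fin N) => a * U (ε⁻¹ • y)) x‖ :=
        mul_le_of_le_one_left (norm_nonneg _) (hψ1 x)
      have hsB : s ≤ C₀ * ρ ^ ((1:ℝ)-(N:ℝ)) * ε ^ (((N:ℝ)-2)/2) := hsv.trans hB
      have htB : t ≤ (C₀ * ρ ^ ((2:ℝ)-(N:ℝ)) * ε ^ (((N:ℝ)-2)/2)) * M :=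
        mul_le_mul hA (hM x) (norm_nonneg _) (by positivity)
      have hsq : ‖fderiv ℝ (fun y => ψ y * (a * U (ε⁻¹ • y))) x‖ ^ 2 ≤ (s + t) ^ 2 :=
        pow_le_pow_left₀ (norm_nonneg _) hn 2
      rw [hKe]
      have hexp : (s + t) ^ 2 = s^2 + 2*(s*t) + t^2 := by ring
      have hs2 : s^2 ≤ ‖fderiv ℝ (fun y : EuclideanSpace ℝ (Fin N) => a * U (ε⁻¹ • y)) x‖^2 :=
        pow_le_pow_left₀ hs0 hsv 2
      have hst : s*t ≤ (C₀ * ρ ^ ((1:ℝ)-(N:ℝ)) * ε ^ (((N:ℝ)-2)/2))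
          * ((C₀ * ρ ^ ((2:ℝ)-(N:ℝ)) * ε ^ (((N:ℝ)-2)/2)) * M) :=
        mul_le_mul hsB htB ht0 (by positivity)
      have ht2 : t^2 ≤ ((C₀ * ρ ^ ((2:ℝ)-(N:ℝ)) * ε ^ (((N:ℝ)-2)/2)) * M)^2 :=
        pow_le_pow_left₀ ht0 htB 2
      linarith [hsq, hs2, hst, ht2]
  have hveq : (fun x : EuclideanSpace ℝ (Fin N) =>
        ‖fderiv ℝ (fun y : EuclideanSpace ℝ (Fin N) => a * U (ε⁻¹ • y)) x‖ ^ 2)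
      = fun x => (a * ε⁻¹) ^ 2 * (fun y => ‖fderiv ℝ U y‖ ^ 2) (ε⁻¹ • x) := by
    funext x
    rw [hnorm_v x, mul_pow]
  have hvsq_int : Integrable (fun x : EuclideanSpace ℝ (Fin N) =>
      ‖fderiv ℝ (fun y : EuclideanSpace ℝ (Fin N) => a * U (ε⁻¹ • y)) x‖ ^ 2) := by
    rw [hveq]
    exact ((integrable_comp_smul_iff volume (fun y => ‖fderiv ℝ U y‖ ^ 2)
      (inv_ne_zero hε.ne')).2 hUint).const_mul _
  have hind_int : Integrable (Set.indicator
      (Metric.closedBall (0 : EuclideanSpace ℝ (Fin N)) (2*ρ)) fun _ => K * ε ^ ((N:ℝ)-2)) :=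
    IntegrableOn.integrable_indicator
      (integrableOn_const measure_closedBall_lt_top.ne) measurableSet_closedBall
  have hile : ∫ x, ‖fderiv ℝ (fun y => ψ y * (a * U (ε⁻¹ • y))) x‖ ^ 2
      ≤ ∫ x, (‖fderiv ℝ (fun y : EuclideanSpace ℝ (Fin N) => a * U (ε⁻¹ • y)) x‖ ^ 2
          + Set.indicator (Metric.closedBall (0 : EuclideanSpace ℝ (Fin N)) (2*ρ))
              (fun _ => K * ε ^ ((N:ℝ)-2)) x) :=
    integral_mono_of_nonneg (Filter.Eventually.of_forall fun x => by positivity)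
      (hvsq_int.add hind_int) (Filter.Eventually.of_forall hpw)
  have hsplit : ∫ x, (‖fderiv ℝ (fun y : EuclideanSpace ℝ (Fin N) => a * U (ε⁻¹ • y)) x‖ ^ 2
          + Set.indicator (Metric.closedBall (0 : EuclideanSpace ℝ (Fin N)) (2*ρ))
              (fun _ => K * ε ^ ((N:ℝ)-2)) x)
      = (∫ x, ‖fderiv ℝ (fun y : EuclideanSpace ℝ (Fin N) => a * U (ε⁻¹ • y)) x‖ ^ 2)
        + K * ε ^ ((N:ℝ)-2)
          * (volume (Metric.closedBall (0 : EuclideanSpace ℝ (Fin N)) (2*ρ))).toReal := by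
    rw [integral_add hvsq_int hind_int, integral_indicator measurableSet_closedBall,
      setIntegral_const, smul_eq_mul, measureReal_def]
    ring
  have hone : (a * ε⁻¹) ^ 2 * (ε:ℝ) ^ (N:ℕ) = 1 := by
    rw [ha_def, hεinv, mul_pow, ← Real.rpow_natCast (ε ^ (-(((N:ℝ)-2)/2))) 2,
      ← Real.rpow_mul hε.le, ← Real.rpow_natCast (ε ^ (-1:ℝ)) 2, ← Real.rpow_mul hε.le,
      ← Real.rpow_natCast ε N, ← Real.rpow_add hε, ← Real.rpow_add hε,
      show -(((N:ℝ)-2)/2) * (2:ℕ) + (-1:ℝ) * (2:ℕ) + (N:ℝ) = 0 by push_cast; ring,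
      Real.rpow_zero]
  have hval : (∫ x, ‖fderiv ℝ (fun y : EuclideanSpace ℝ (Fin N) => a * U (ε⁻¹ • y)) x‖ ^ 2)
      = ∫ x, ‖fderiv ℝ U x‖ ^ 2 := by
    rw [hveq, integral_const_mul, aux_scale (N := N) (fun y => ‖fderiv ℝ U y‖ ^ 2) hε,
      ← mul_assoc, hone, one_mul]
  have hpart1 : ∫ x, ‖fderiv ℝ (fun y => ψ y * (a * U (ε⁻¹ • y))) x‖ ^ 2
      ≤ (∫ x, ‖fderiv ℝ U x‖ ^ 2) + C * ε ^ ((N:ℝ)-2) := by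
    refine hile.trans ?_
    rw [hsplit, hval]
    have h1 : K * ε ^ ((N:ℝ)-2)
        * (volume (Metric.closedBall (0 : EuclideanSpace ℝ (Fin N)) (2*ρ))).toReal
        = Ci * ε ^ ((N:ℝ)-2) := by
      rw [hCi_def]
      ring
    have h2 : Ci * ε ^ ((N:ℝ)-2) ≤ C * ε ^ ((N:ℝ)-2) :=
      mul_le_mul_of_nonneg_right hCiC hεN2.le
    linarith
  exact ⟨hpart1, hpart2, hpart3⟩
end

section
/- Let 1 < q < 2 and a, b, c > 0. Define F(s) = (1/2 − 1/(2q)) (a + s² b)^{q/(q-1)} (a + |s|^{2q} b + 2|s|^{q} c)^{-1/(q-1)} for s ∈ ℝ. Then F(0) = (1/2 − 1/(2q)) a, lim_{s → 0} (F(0) − F(s))/|s|^{q} = F(0) · 2c/(a(q-1)) > 0, and consequently there exists δ > 0 such that F(s) < F(0) for all s with 0 < |s| < δ. -/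
open Real Filter
open scoped Topology

theorem stmt_18 (q : ℝ) (hq1 : 1 < q) (hq2 : q < 2)
    (a b c : ℝ) (ha : 0 < a) (hb : 0 < b) (hc : 0 < c)
    (F : ℝ → ℝ)
    (hF : ∀ s : ℝ, F s = (1 / 2 - 1 / (2 * q)) * (a + s ^ 2 * b) ^ (q / (q - 1)) *
      (a + |s| ^ (2 * q) * b + 2 * |s| ^ q * c) ^ (-(1 / (q - 1)))) :
    F 0 = (1 / 2 - 1 / (2 * q)) * a ∧
    Tendsto (fun s : ℝ => (F 0 - F s) / |s| ^ q) (nhdsWithin 0 {(0 : ℝ)}ᶜ)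
      (nhds (F 0 * (2 * c / (a * (q - 1))))) ∧
    0 < F 0 * (2 * c / (a * (q - 1))) ∧
    ∃ δ > (0 : ℝ), ∀ s : ℝ, 0 < |s| → |s| < δ → F s < F 0 := by
  have hq0 : 0 < q := by linarith
  have hqm1 : 0 < q - 1 := by linarith
  have hC : 0 < 1 / 2 - 1 / (2 * q) := by
    rw [sub_pos, div_lt_div_iff₀ (by linarith) (by norm_num)]
    linarith
  set C := 1 / 2 - 1 / (2 * q) with hCdef
  -- value at 0
  have hapow : a ^ (q / (q - 1)) * a ^ (-(1 / (q - 1))) = a := by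
    rw [← Real.rpow_add ha]
    have : q / (q - 1) + -(1 / (q - 1)) = 1 := by field_simp; ring
    rw [this, Real.rpow_one]
  have hF0 : F 0 = C * a := by
    rw [hF]
    rw [abs_zero, Real.zero_rpow (by positivity : (2 : ℝ) * q ≠ 0),
      Real.zero_rpow hq0.ne']
    simp only [ne_eq, OfNat.ofNat_ne_zero, not_false_eq_true, zero_pow, zero_mul,
      add_zero, mul_zero]
    rw [mul_assoc, hapow]
  -- the auxiliary function h
  set h : ℝ → ℝ := fun t =>
    (a + t ^ ((2 : ℝ) / q) * b) ^ (q / (q - 1)) *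
      (a + t ^ 2 * b + 2 * t * c) ^ (-(1 / (q - 1))) with hhdef
  have h2q : (1 : ℝ) ≤ 2 / q := by
    rw [le_div_iff₀ hq0]; linarith
  have h2qm1 : (0 : ℝ) < 2 / q - 1 := sub_pos.mpr ((one_lt_div hq0).mpr hq2)
  have h2qne : ((2 : ℝ) / q) ≠ 0 := by positivity
  -- derivative of h at 0
  have hg1 : HasDerivAt (fun t : ℝ => a + t ^ ((2 : ℝ) / q) * b) 0 0 := by
    have := ((Real.hasDerivAt_rpow_const (x := (0 : ℝ)) (p := (2 : ℝ) / q)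
      (Or.inr h2q)).mul_const b).const_add a
    refine this.congr_deriv ?_
    rw [Real.zero_rpow h2qm1.ne']
    ring
  have hg1v : (fun t : ℝ => a + t ^ ((2 : ℝ) / q) * b) 0 = a := by
    simp [Real.zero_rpow h2qne]
  have hg2 : HasDerivAt (fun t : ℝ => a + t ^ 2 * b + 2 * t * c) (2 * c) 0 := by
    have := (((hasDerivAt_pow 2 (0 : ℝ)).mul_const b).const_add a).add
      (((hasDerivAt_id (0 : ℝ)).const_mul 2).mul_const c)
    refine this.congr_deriv ?_
    norm_num
  have hg2v : (fun t : ℝ => a + t ^ 2 * b + 2 * t * c) 0 = a := by norm_num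
  have houter1 : HasDerivAt (fun u : ℝ => u ^ (q / (q - 1)))
      (q / (q - 1) * a ^ (q / (q - 1) - 1)) a :=
    Real.hasDerivAt_rpow_const (Or.inl ha.ne')
  have houter2 : HasDerivAt (fun u : ℝ => u ^ (-(1 / (q - 1))))
      (-(1 / (q - 1)) * a ^ (-(1 / (q - 1)) - 1)) a :=
    Real.hasDerivAt_rpow_const (Or.inl ha.ne')
  have hf1 : HasDerivAt (fun t : ℝ => (a + t ^ ((2 : ℝ) / q) * b) ^ (q / (q - 1))) 0 0 := by
    have := HasDerivAt.comp (0 : ℝ) (hg1v ▸ houter1) hg1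
    exact this.congr_deriv (by simp)
  have hf2 : HasDerivAt (fun t : ℝ => (a + t ^ 2 * b + 2 * t * c) ^ (-(1 / (q - 1))))
      (-(1 / (q - 1)) * a ^ (-(1 / (q - 1)) - 1) * (2 * c)) 0 := by
    have := HasDerivAt.comp (0 : ℝ) (hg2v ▸ houter2) hg2
    exact this.congr_deriv (by rw [hg2v])
  have hD : HasDerivAt h
      (a ^ (q / (q - 1)) * (-(1 / (q - 1)) * a ^ (-(1 / (q - 1)) - 1) * (2 * c))) 0 := by
    have := hf1.mul hf2
    refine this.congr_deriv ?_
    simp [hg1v, hg2v, Real.zero_rpow h2qne]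
  set D := a ^ (q / (q - 1)) * (-(1 / (q - 1)) * a ^ (-(1 / (q - 1)) - 1) * (2 * c)) with hDdef
  have hh0 : h 0 = a := by
    simp only [hhdef]
    rw [Real.zero_rpow h2qne, zero_mul, add_zero,
      zero_pow (by norm_num : (2 : ℕ) ≠ 0), zero_mul, add_zero, mul_zero, zero_mul,
      add_zero, hapow]
  -- limit value identification
  have hLval : C * (-D) = C * a * (2 * c / (a * (q - 1))) := by
    rw [hDdef]
    have h1 : a ^ (q / (q - 1)) * a ^ (-(1 / (q - 1)) - 1) = a ^ (0 : ℝ) := by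
      rw [← Real.rpow_add ha]
      congr 1
      field_simp
      ring
    have h2 : a ^ (q / (q - 1)) * (-(1 / (q - 1)) * a ^ (-(1 / (q - 1)) - 1) * (2 * c))
        = -(1 / (q - 1)) * (2 * c) * (a ^ (q / (q - 1)) * a ^ (-(1 / (q - 1)) - 1)) := by ring
    rw [h2, h1, Real.rpow_zero]
    field_simp
  -- tendsto of slope
  have hslope : Tendsto (fun t : ℝ => (h 0 - h t) / t) (𝓝[≠] (0 : ℝ)) (𝓝 (-D)) := by
    have h1 := hasDerivAt_iff_tendsto_slope.mp hD
    have h2 := h1.neg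
    refine h2.congr (fun t => ?_)
    simp only [slope_def_field, sub_zero]
    rw [← neg_div, neg_sub]
  have hslope' : Tendsto (fun t : ℝ => (h 0 - h t) / t) (𝓝[>] (0 : ℝ)) (𝓝 (-D)) :=
    hslope.mono_left (nhdsWithin_mono _ (fun t ht => ne_of_gt ht))
  -- the map s ↦ |s|^q
  set φ : ℝ → ℝ := fun s => |s| ^ q with hφdef
  have hφtendsto : Tendsto φ (𝓝[≠] (0 : ℝ)) (𝓝[>] (0 : ℝ)) := by
    rw [tendsto_nhdsWithin_iff]
    constructor
    · have hcont : ContinuousAt φ 0 := by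
        have h1 : ContinuousAt (fun x : ℝ => x ^ q) (|(0 : ℝ)|) :=
          Real.continuousAt_rpow_const _ _ (Or.inr hq0.le)
        exact h1.comp continuous_abs.continuousAt
      have hv : φ 0 = 0 := by simp [hφdef, Real.zero_rpow hq0.ne']
      exact (hv ▸ hcont.tendsto).mono_left nhdsWithin_le_nhds
    · filter_upwards [self_mem_nhdsWithin] with s hs
      exact Real.rpow_pos_of_pos (abs_pos.mpr hs) q
  have hcomp : Tendsto (fun s : ℝ => (h 0 - h (φ s)) / φ s) (𝓝[≠] (0 : ℝ)) (𝓝 (-D)) :=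
    hslope'.comp hφtendsto
  -- pointwise identity F s = C * h (φ s)
  have hFs : ∀ s : ℝ, F s = C * h (φ s) := by
    intro s
    rw [hF, hhdef]
    have e1 : (φ s) ^ ((2 : ℝ) / q) = s ^ 2 := by
      rw [hφdef]
      rw [← Real.rpow_mul (abs_nonneg s)]
      rw [show q * (2 / q) = ((2 : ℕ) : ℝ) by push_cast; field_simp]
      rw [Real.rpow_natCast, sq_abs]
    have e2 : (φ s) ^ 2 = |s| ^ (2 * q) := by
      rw [hφdef]
      rw [← Real.rpow_natCast (|s| ^ q) 2, ← Real.rpow_mul (abs_nonneg s)]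
      norm_num [mul_comm]
    simp only [e1, e2]
    ring
  have hF0h : F 0 = C * h 0 := by rw [hF0, hh0]
  -- main tendsto
  have hmain : Tendsto (fun s : ℝ => (F 0 - F s) / |s| ^ q) (𝓝[≠] (0 : ℝ))
      (𝓝 (F 0 * (2 * c / (a * (q - 1))))) := by
    have h1 := hcomp.const_mul C
    rw [hLval, ← hF0] at h1
    refine h1.congr (fun s => ?_)
    rw [hF0h, hFs s, ← mul_sub, mul_div_assoc]
  have hposL : 0 < F 0 * (2 * c / (a * (q - 1))) := by
    rw [hF0]
    exact mul_pos (mul_pos hC ha)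
      (div_pos (by linarith) (mul_pos ha hqm1))
  refine ⟨hF0, hmain, hposL, ?_⟩
  have hev : ∀ᶠ s in 𝓝[≠] (0 : ℝ), 0 < (F 0 - F s) / |s| ^ q :=
    hmain.eventually (eventually_gt_nhds hposL)
  rw [eventually_nhdsWithin_iff, Metric.eventually_nhds_iff] at hev
  obtain ⟨δ, hδ, hδ'⟩ := hev
  refine ⟨δ, hδ, fun s hs1 hs2 => ?_⟩
  have hne : s ≠ 0 := abs_pos.mp hs1
  have hkey := hδ' (y := s) (by simpa [Real.dist_eq] using hs2) hne
  have hp : 0 < |s| ^ q := Real.rpow_pos_of_pos hs1 q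
  have := mul_pos hkey hp
  rw [div_mul_cancel₀ _ hp.ne'] at this
  linarith
end
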